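/- arXiv:1606.05100 — 8 statements merged into one kernel-verified Lean document; each statement's English description precedes it below -/
import Mathlib

section
/- Let G = {G_1,...,G_K} be a partition of {1,...,p} with each group of size at least 2, and suppose the covariance Σ satisfies Σ = A C Aᵀ + Γ where A_{ak} = 1 if a ∈ G_k and 0 otherwise, C is symmetric, and Γ is diagonal. If Δ(C) := min_{j<k}(C_{jj}+C_{kk}-2C_{jk}) > 0, then for every a, the set V(a) := {a' ≠ a : max_{c ≠ a,a'} |Σ_{ac} - Σ_{a'c}| = 0} equals G_{k(a)} \ {a}, where k(a) is the group containing a. In particular the partition G is determined by Σ. -/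
/-- In a G-block covariance model with all groups of size ≥ 2 and Δ(C) > 0,
for each a the set V(a) = {a' ≠ a : max_{c ≠ a,a'} |Σ_ac − Σ_a'c| = 0} equals
G_{k(a)} \ {a}; hence the partition is identifiable from Σ. -/
theorem stmt_2 (p K : ℕ) (g : Fin p → Fin K)
    (hsize : ∀ j : Fin K, 2 ≤ (Finset.univ.filter (fun a => g a = j)).card)
    (C : Matrix (Fin K) (Fin K) ℝ) (hCsym : C.IsSymm)
    (S : Matrix (Fin p) (Fin p) ℝ)
    (hblock : ∀ a b : Fin p, a ≠ b → S a b = C (g a) (g b))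
    (hΔ : ∀ j k : Fin K, j ≠ k → 0 < C j j + C k k - 2 * C j k) :
    ∀ a a' : Fin p, a' ≠ a →
      ((∀ c, c ≠ a → c ≠ a' → S a c = S a' c) ↔ g a' = g a) := by
  intro a a' haa
  constructor
  · intro h
    by_contra hg
    -- pick c in group of a, c ≠ a
    obtain ⟨c, hc, hca⟩ := Finset.exists_mem_ne
      (lt_of_lt_of_le one_lt_two (hsize (g a))) a
    simp only [Finset.mem_filter] at hc
    have hca' : c ≠ a' := fun e => hg (by rw [← e, hc.2])
    obtain ⟨d, hd, hda'⟩ := Finset.exists_mem_ne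
      (lt_of_lt_of_le one_lt_two (hsize (g a'))) a'
    simp only [Finset.mem_filter] at hd
    have hda : d ≠ a := fun e => hg (by rw [← e, hd.2])
    have e1 : C (g a) (g a) = C (g a') (g a) := by
      have := h c hca hca'
      rw [hblock a c (Ne.symm hca), hblock a' c (Ne.symm hca'), hc.2] at this
      exact this
    have e2 : C (g a) (g a') = C (g a') (g a') := by
      have := h d hda hda'
      rw [hblock a d (Ne.symm hda), hblock a' d (Ne.symm hda'), hd.2] at this
      exact this
    have hsymm : C (g a') (g a) = C (g a) (g a') := by
      have := hCsym
      rw [Matrix.IsSymm] at this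
      calc C (g a') (g a) = C.transpose (g a) (g a') := rfl
        _ = C (g a) (g a') := by rw [this]
    have := hΔ (g a') (g a) hg
    rw [← e2, hsymm] at this
    nlinarith [e1, hsymm]
  · intro hg c hca hca'
    rw [hblock a c (Ne.symm hca), hblock a' c (Ne.symm hca'), hg]
end

section
/- Let B* be the p×p matrix with B*_{ab} = 1/|G_k| if a,b belong to the same group G_k of a partition G = {G_1,...,G_K} of {1,...,p}, and B*_{ab} = 0 otherwise. Let 𝒞 be the set of p×p matrices B that are symmetric positive semidefinite, have all entries nonnegative, have every row summing to 1, and have trace K. Then the only matrix in 𝒞 whose support is contained in the support of B* is B* itself. -/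
open Finset Matrix

/-- The normalized partnership matrix of the partition given by assignment `g`. -/
noncomputable def Bstar (p K : ℕ) (g : Fin p → Fin K) : Matrix (Fin p) (Fin p) ℝ :=
  fun a b => if g a = g b then ((Finset.univ.filter (fun c => g c = g a)).card : ℝ)⁻¹ else 0

/-- The convex set 𝒞: symmetric PSD matrices with nonnegative entries,
all row sums 1, and trace K. -/
def memC (p K : ℕ) (B : Matrix (Fin p) (Fin p) ℝ) : Prop :=
  B.PosSemidef ∧ (∀ a b, 0 ≤ B a b) ∧ (∀ a, ∑ b, B a b = 1) ∧ B.trace = (K : ℝ)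

lemma Bstar_symm (p K : ℕ) (g : Fin p → Fin K) (a b : Fin p) :
    Bstar p K g a b = Bstar p K g b a := by
  unfold Bstar
  by_cases h : g a = g b
  · rw [if_pos h, if_pos h.symm, h]
  · rw [if_neg h, if_neg (Ne.symm h)]

lemma Bstar_supp (p K : ℕ) (g : Fin p → Fin K) (a b : Fin p) (h : g a ≠ g b) :
    Bstar p K g a b = 0 := by
  unfold Bstar; rw [if_neg h]

lemma fiber_card_ne (p K : ℕ) (g : Fin p → Fin K) (a : Fin p) :
    ((Finset.univ.filter (fun c => g c = g a)).card : ℝ) ≠ 0 := by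
  have : 0 < (Finset.univ.filter (fun c => g c = g a)).card :=
    Finset.card_pos.2 ⟨a, by simp⟩
  exact_mod_cast this.ne'

lemma Bstar_rowsum (p K : ℕ) (g : Fin p → Fin K) (a : Fin p) :
    ∑ b, Bstar p K g a b = 1 := by
  unfold Bstar
  rw [← Finset.sum_filter]
  have hfe : Finset.univ.filter (fun b => g a = g b)
      = Finset.univ.filter (fun b => g b = g a) := by
    apply Finset.filter_congr; intro x _; simp [eq_comm]
  rw [hfe, Finset.sum_const, nsmul_eq_mul, mul_inv_cancel₀ (fiber_card_ne p K g a)]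

lemma mul_Bstar (p K : ℕ) (g : Fin p → Fin K) (B : Matrix (Fin p) (Fin p) ℝ)
    (hrow : ∀ a, ∑ b, B a b = 1)
    (hsupp : ∀ a b, g a ≠ g b → B a b = 0) :
    B * Bstar p K g = Bstar p K g := by
  ext a b
  rw [Matrix.mul_apply]
  have step : ∀ c, B a c * Bstar p K g c b
      = if g c = g b then B a c * ((Finset.univ.filter (fun x => g x = g b)).card : ℝ)⁻¹
        else 0 := by
    intro c
    unfold Bstar
    by_cases h : g c = g b
    · rw [if_pos h, if_pos h, h]
    · rw [if_neg h, if_neg h, mul_zero]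
  rw [Finset.sum_congr rfl (fun c _ => step c), ← Finset.sum_filter]
  by_cases h : g a = g b
  · rw [← Finset.sum_mul]
    have hsum : ∑ c ∈ Finset.univ.filter (fun x => g x = g b), B a c = 1 := by
      rw [← hrow a]
      apply Finset.sum_subset (Finset.filter_subset _ _)
      intro x _ hx
      simp only [Finset.mem_filter, Finset.mem_univ, true_and] at hx
      exact hsupp a x (fun he => hx (he.symm.trans h))
    rw [hsum, one_mul]
    unfold Bstar
    rw [if_pos h, h]
  · rw [Finset.sum_eq_zero, Bstar_supp p K g a b h]
    intro c hc
    simp only [Finset.mem_filter, Finset.mem_univ, true_and] at hc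
    rw [hsupp a c (fun he => h (he.trans hc)), zero_mul]

lemma Bstar_trace (p K : ℕ) (g : Fin p → Fin K) (hg : Function.Surjective g) :
    (Bstar p K g).trace = (K : ℝ) := by
  have h1 : (Bstar p K g).trace
      = ∑ a, ((Finset.univ.filter (fun c => g c = g a)).card : ℝ)⁻¹ := by
    unfold Matrix.trace Matrix.diag Bstar
    simp
  rw [h1, ← Finset.sum_fiberwise Finset.univ g
    (fun a => ((Finset.univ.filter (fun c => g c = g a)).card : ℝ)⁻¹)]
  rw [show (K : ℝ) = ∑ _k : Fin K, 1 by simp]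
  apply Finset.sum_congr rfl
  intro k _
  have hcongr : ∀ a ∈ Finset.univ.filter (fun a => g a = k),
      ((Finset.univ.filter (fun c => g c = g a)).card : ℝ)⁻¹
        = ((Finset.univ.filter (fun c => g c = k)).card : ℝ)⁻¹ := by
    intro a ha
    simp only [Finset.mem_filter, Finset.mem_univ, true_and] at ha
    rw [ha]
  rw [Finset.sum_congr rfl hcongr, Finset.sum_const, nsmul_eq_mul]
  obtain ⟨a0, ha0⟩ := hg k
  have hcard : ((Finset.univ.filter (fun c => g c = k)).card : ℝ) ≠ 0 := by
    have : 0 < (Finset.univ.filter (fun c => g c = k)).card :=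
      Finset.card_pos.2 ⟨a0, by simp [ha0]⟩
    exact_mod_cast this.ne'
  exact mul_inv_cancel₀ hcard

lemma Bstar_conjTranspose (p K : ℕ) (g : Fin p → Fin K) :
    (Bstar p K g)ᴴ = Bstar p K g := by
  ext a b
  simp only [Matrix.conjTranspose_apply, star_trivial]
  exact (Bstar_symm p K g a b).symm

lemma Bstar_posSemidef (p K : ℕ) (g : Fin p → Fin K) :
    (Bstar p K g).PosSemidef := by
  have h := Matrix.posSemidef_conjTranspose_mul_self (Bstar p K g)
  rwa [Bstar_conjTranspose, mul_Bstar p K g _ (Bstar_rowsum p K g) (Bstar_supp p K g)] at h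

/-- the only matrix in 𝒞 supported in supp(B*) is B* itself. -/
theorem stmt_3 (p K : ℕ) (g : Fin p → Fin K) (hg : Function.Surjective g) :
    {B : Matrix (Fin p) (Fin p) ℝ |
        memC p K B ∧ ∀ a b, Bstar p K g a b = 0 → B a b = 0}
      = {Bstar p K g} := by
  ext B
  simp only [Set.mem_setOf_eq, Set.mem_singleton_iff]
  constructor
  · rintro ⟨⟨hpsd, _hnn, hrow, htr⟩, hsupp⟩
    set S := Bstar p K g with hS
    have hsupp' : ∀ a b, g a ≠ g b → B a b = 0 := fun a b h =>
      hsupp a b (Bstar_supp p K g a b h)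
    have h1 : B * S = S := mul_Bstar p K g B hrow hsupp'
    have hSH : Sᴴ = S := Bstar_conjTranspose p K g
    have hBH : Bᴴ = B := hpsd.isHermitian
    have h2 : S * B = S := by
      have h := congrArg Matrix.conjTranspose h1
      rwa [Matrix.conjTranspose_mul, hSH, hBH] at h
    have h3 : S * S = S := mul_Bstar p K g S (Bstar_rowsum p K g) (Bstar_supp p K g)
    have hfact : (1 - S)ᴴ * B * (1 - S) = B - S := by
      rw [Matrix.conjTranspose_sub, Matrix.conjTranspose_one, hSH]
      have hexp : (1 - S) * B * (1 - S) = B - S * B - B * S + S * B * S := by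
        noncomm_ring
      rw [hexp, h2, h1, h3]
      abel
    have hpsdC : (B - S).PosSemidef := by
      rw [← hfact]
      exact hpsd.conjTranspose_mul_mul_same (1 - S)
    have htrC : (B - S).trace = 0 := by
      rw [Matrix.trace_sub, htr, Bstar_trace p K g hg, sub_self]
    have hdiag_nonneg : ∀ a, 0 ≤ (B - S) a a := by
      intro a
      have h := hpsdC.diag_nonneg (i := a)
      simpa using h
    have hdiag : ∀ a ∈ Finset.univ, (B - S) a a = 0 := by
      rw [← Finset.sum_eq_zero_iff_of_nonneg (fun a _ => hdiag_nonneg a)]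
      exact htrC
    have hzero : B - S = 0 := by
      ext a b
      have h0 : (B - S) *ᵥ Pi.single b 1 = 0 := by
        rw [← hpsdC.dotProduct_mulVec_zero_iff]
        simpa using hdiag b (Finset.mem_univ b)
      have h := congrFun h0 a
      simpa using h
    exact sub_eq_zero.mp hzero
  · rintro rfl
    refine ⟨⟨Bstar_posSemidef p K g, ?_, Bstar_rowsum p K g, Bstar_trace p K g hg⟩,
      fun a b h => h⟩
    intro a b
    unfold Bstar
    split
    · positivity
    · exact le_refl _
end

section
/- Let G = {G_1,...,G_K} be a partition of {1,...,p} with minimal group size m, let B* be the associated normalized partnership matrix (B*_{ab} = 1/|G_k| if a,b ∈ G_k, else 0), and let Γ be a diagonal p×p matrix with Γ_{aa} = γ_k for all a ∈ G_k. Then for any matrix B in the set 𝒞 (symmetric PSD, nonnegative entries, row sums 1, trace K), ⟨Γ, B* − B⟩ ≥ −((max_k γ_k − min_k γ_k)/m) · Σ_{j ≠ k} |B_{G_j G_k}|_1, where |B_{G_j G_k}|_1 = Σ_{a ∈ G_j, b ∈ G_k} |B_{ab}|. -/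
open Finset

/-- ⟨Γ, B* − B⟩ ≥ −(|Γ|_V/m)·Σ_{j≠k}|B_{G_jG_k}|₁ for B ∈ 𝒞, where
m is the minimal group size and |Γ|_V = max γ − min γ. -/
theorem stmt_5 (p K : ℕ) (g : Fin p → Fin K) (hg : Function.Surjective g)
    (γ : Fin K → ℝ)
    (m : ℕ)
    (hm : IsLeast {n : ℕ | ∃ j, n = (Finset.univ.filter (fun a => g a = j)).card} m)
    (γmax γmin : ℝ)
    (hmax : IsGreatest (Set.range γ) γmax) (hmin : IsLeast (Set.range γ) γmin)
    (B : Matrix (Fin p) (Fin p) ℝ) (hB : memC p K B) :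
    -(((γmax - γmin) / (m : ℝ)) * ∑ a, ∑ b, if g a ≠ g b then |B a b| else 0)
      ≤ ∑ a, ∑ b,
          (Matrix.diagonal (fun c => γ (g c))) a b * ((Bstar p K g - B) a b) := by
  classical
  obtain ⟨hPSD, hnn, hrow, htr⟩ := hB
  set F : Fin K → Finset (Fin p) := fun j => univ.filter (fun a => g a = j) with hF
  have hmemF : ∀ j a, a ∈ F j ↔ g a = j := by intro j a; simp [hF]
  have hFpos : ∀ j, 0 < (F j).card := by
    intro j
    obtain ⟨a, ha⟩ := hg j
    exact Finset.card_pos.mpr ⟨a, (hmemF j a).mpr ha⟩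
  have hm1 : 0 < m := by
    obtain ⟨j, hj⟩ := hm.1
    rw [hj]; exact hFpos j
  have hmR : (0:ℝ) < (m:ℝ) := by exact_mod_cast hm1
  have hmle : ∀ j, (m:ℝ) ≤ ((F j).card : ℝ) := by
    intro j; exact_mod_cast hm.2 ⟨j, rfl⟩
  have hγmm : γmin ≤ γmax := hmin.2 hmax.1
  have hγub : ∀ j, γ j ≤ γmax := fun j => hmax.2 ⟨j, rfl⟩
  have hγlb : ∀ j, γmin ≤ γ j := fun j => hmin.2 ⟨j, rfl⟩
  have hsymm : ∀ a b, B b a = B a b := by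
    intro a b
    have := congrFun (congrFun hPSD.1 a) b
    simpa [Matrix.conjTranspose_apply] using this
  set trk : Fin K → ℝ := fun j => ∑ a ∈ F j, B a a with htrk
  set W : Fin K → ℝ := fun j => ∑ a ∈ F j, ∑ b ∈ F j, B a b with hW
  set off : Fin K → ℝ := fun j => ((F j).card : ℝ) - W j with hoff
  have hrowsub : ∀ j a, ∑ b ∈ F j, B a b ≤ 1 := by
    intro j a
    calc ∑ b ∈ F j, B a b ≤ ∑ b, B a b :=
          Finset.sum_le_sum_of_subset_of_nonneg (Finset.subset_univ _)
            (fun b _ _ => hnn a b)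
      _ = 1 := hrow a
  have hoffnn : ∀ j, 0 ≤ off j := by
    intro j
    have : W j ≤ ∑ _a ∈ F j, (1:ℝ) := Finset.sum_le_sum fun a _ => hrowsub j a
    simpa [hoff, hW] using this
  -- key PSD inequality : W j ≤ card * trk j
  have hkey : ∀ j, W j ≤ ((F j).card : ℝ) * trk j := by
    intro j
    have hterm : ∀ a b, 0 ≤ B a a + B b b - 2 * B a b := by
      intro a b
      set x : Fin p → ℝ := fun i => (if i = a then (1:ℝ) else 0) - (if i = b then 1 else 0)
        with hx
      have h0 := hPSD.dotProduct_mulVec_nonneg x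
      have hdot : dotProduct (star x) (Matrix.mulVec B x)
          = B a a + B b b - B a b - B b a := by
        simp only [hx, dotProduct, Matrix.mulVec, star_trivial, Pi.star_apply]
        simp [dotProduct, mul_sub, sub_mul, Finset.sum_sub_distrib,
          mul_ite, ite_mul, Finset.sum_ite_eq, Finset.sum_ite_eq']
        ring
      rw [hdot] at h0
      have hba := hsymm a b
      linarith
    have hsum : 0 ≤ ∑ a ∈ F j, ∑ b ∈ F j, (B a a + B b b - 2 * B a b) :=
      Finset.sum_nonneg fun a _ => Finset.sum_nonneg fun b _ => hterm a b
    have e1 : ∑ a ∈ F j, ∑ _b ∈ F j, B a a = ((F j).card : ℝ) * trk j := by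
      simp [Finset.sum_const, nsmul_eq_mul, htrk, Finset.mul_sum]
    have e2 : ∑ a ∈ F j, ∑ b ∈ F j, B b b = ((F j).card : ℝ) * trk j := by
      rw [Finset.sum_comm]; exact e1
    have e3 : ∑ a ∈ F j, ∑ b ∈ F j, (2 * B a b) = 2 * W j := by
      simp [hW, Finset.mul_sum]
    have hexp : ∑ a ∈ F j, ∑ b ∈ F j, (B a a + B b b - 2 * B a b)
        = (∑ a ∈ F j, ∑ _b ∈ F j, B a a) + (∑ a ∈ F j, ∑ b ∈ F j, B b b)
          - ∑ a ∈ F j, ∑ b ∈ F j, (2 * B a b) := by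
      simp [Finset.sum_add_distrib, Finset.sum_sub_distrib]
    rw [hexp, e1, e2, e3] at hsum
    linarith
  -- per-group deficit bound
  have hd : ∀ j, 1 - trk j ≤ off j / (m : ℝ) := by
    intro j
    have hn : (0:ℝ) < ((F j).card : ℝ) := by exact_mod_cast hFpos j
    have h1 : W j / ((F j).card : ℝ) ≤ trk j := by
      rw [div_le_iff₀ hn]; linarith [hkey j]
    have h2 : off j / ((F j).card : ℝ) = 1 - W j / ((F j).card : ℝ) := by
      rw [hoff]; field_simp
    have h3 : off j / ((F j).card : ℝ) ≤ off j / (m : ℝ) := by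
      apply div_le_div_of_nonneg_left (hoffnn j) hmR (hmle j)
    linarith
  -- RHS rewrite
  have hdiag : ∀ a, ∑ b, Matrix.diagonal (fun c => γ (g c)) a b * ((Bstar p K g - B) a b)
      = γ (g a) * ((((F (g a)).card : ℝ))⁻¹ - B a a) := by
    intro a
    rw [Finset.sum_eq_single a]
    · simp [Matrix.diagonal_apply_eq, Bstar, hF]
    · intro b _ hba
      rw [Matrix.diagonal_apply_ne _ (Ne.symm hba), zero_mul]
    · intro h; exact absurd (Finset.mem_univ a) h
  have hRHS : ∑ a, ∑ b, Matrix.diagonal (fun c => γ (g c)) a b * ((Bstar p K g - B) a b)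
      = ∑ j, γ j * (1 - trk j) := by
    calc ∑ a, ∑ b, Matrix.diagonal (fun c => γ (g c)) a b * ((Bstar p K g - B) a b)
        = ∑ a, γ (g a) * ((((F (g a)).card : ℝ))⁻¹ - B a a) :=
          Finset.sum_congr rfl fun a _ => hdiag a
      _ = ∑ j, ∑ a ∈ univ.filter (fun a => g a = j),
            γ (g a) * ((((F (g a)).card : ℝ))⁻¹ - B a a) :=
          (Finset.sum_fiberwise _ _ _).symm
      _ = ∑ j, γ j * (1 - trk j) := by
          refine Finset.sum_congr rfl fun j _ => ?_
          have hn0 : ((F j).card : ℝ) ≠ 0 := by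
            have := hFpos j; positivity
          calc ∑ a ∈ univ.filter (fun a => g a = j),
                γ (g a) * ((((F (g a)).card : ℝ))⁻¹ - B a a)
              = ∑ a ∈ F j, γ j * ((((F j).card : ℝ))⁻¹ - B a a) := by
                refine Finset.sum_congr (by rw [hF]) fun a ha => ?_
                rw [(hmemF j a).mp ha]
            _ = γ j * (∑ a ∈ F j, ((((F j).card : ℝ))⁻¹ - B a a)) := by
                rw [Finset.mul_sum]
            _ = γ j * (1 - trk j) := by
                rw [Finset.sum_sub_distrib, Finset.sum_const, nsmul_eq_mul,
                  mul_inv_cancel₀ hn0, htrk]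
  -- total deficit is zero
  have hsum0 : ∑ j, (1 - trk j) = 0 := by
    have h1 : ∑ j, trk j = (K : ℝ) := by
      rw [htrk]
      rw [show (fun j => ∑ a ∈ F j, B a a) = fun j => ∑ a ∈ univ.filter (fun a => g a = j), B a a
        from by rw [hF]]
      rw [Finset.sum_fiberwise]
      rw [← htr]
      simp [Matrix.trace, Matrix.diag]
    rw [Finset.sum_sub_distrib, h1]
    simp
  -- off-block sum
  have hOff : ∑ a, ∑ b, (if g a ≠ g b then |B a b| else 0) = ∑ j, off j := by
    have habs : ∀ a b, |B a b| = B a b := fun a b => abs_of_nonneg (hnn a b)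
    calc ∑ a, ∑ b, (if g a ≠ g b then |B a b| else 0)
        = ∑ a, (1 - ∑ b ∈ F (g a), B a b) := by
          refine Finset.sum_congr rfl fun a _ => ?_
          have h1 : ∑ b, (if g a ≠ g b then |B a b| else 0)
              = ∑ b, (B a b - if g b = g a then B a b else 0) := by
            refine Finset.sum_congr rfl fun b _ => ?_
            by_cases h : g a = g b <;> simp [h, habs, Ne, eq_comm]
          rw [h1, Finset.sum_sub_distrib, hrow]
          congr 1
          rw [hF]
          rw [Finset.sum_filter]
      _ = ∑ j, ∑ a ∈ univ.filter (fun a => g a = j), (1 - ∑ b ∈ F (g a), B a b) :=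
          (Finset.sum_fiberwise _ _ _).symm
      _ = ∑ j, off j := by
          refine Finset.sum_congr rfl fun j _ => ?_
          calc ∑ a ∈ univ.filter (fun a => g a = j), (1 - ∑ b ∈ F (g a), B a b)
              = ∑ a ∈ F j, (1 - ∑ b ∈ F j, B a b) := by
                refine Finset.sum_congr (by rw [hF]) fun a ha => ?_
                rw [(hmemF j a).mp ha]
            _ = off j := by
                rw [Finset.sum_sub_distrib, Finset.sum_const, nsmul_eq_mul, mul_one,
                  hoff, hW]
  -- termwise lower bound
  have hterm : ∀ j, (γmin - γmax) * (off j / (m : ℝ)) ≤ (γ j - γmax) * (1 - trk j) := by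
    intro j
    have hq : 0 ≤ off j / (m : ℝ) := div_nonneg (hoffnn j) hmR.le
    rcases le_or_gt (1 - trk j) 0 with h | h
    · nlinarith [hγub j, hq]
    · nlinarith [hγub j, hγlb j, hd j, h]
  -- assemble
  have h1 : ∑ j, (γmin - γmax) * (off j / (m : ℝ)) ≤ ∑ j, (γ j - γmax) * (1 - trk j) :=
    Finset.sum_le_sum fun j _ => hterm j
  have h2 : ∑ j, (γ j - γmax) * (1 - trk j)
      = ∑ j, γ j * (1 - trk j) - γmax * ∑ j, (1 - trk j) := by
    rw [Finset.mul_sum, ← Finset.sum_sub_distrib]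
    exact Finset.sum_congr rfl fun j _ => by ring
  have h3 : ∑ j, (γmin - γmax) * (off j / (m : ℝ))
      = (γmin - γmax) / (m : ℝ) * ∑ j, off j := by
    rw [Finset.mul_sum]
    exact Finset.sum_congr rfl fun j _ => by ring
  rw [hsum0, mul_zero, sub_zero] at h2
  rw [h3, h2] at h1
  rw [hRHS, hOff]
  have : -((γmax - γmin) / (m : ℝ) * ∑ j, off j) = (γmin - γmax) / (m : ℝ) * ∑ j, off j := by
    ring
  linarith [h1]
end

section
/- Let Σ = A C Aᵀ + Γ where A is the assignment matrix of a partition G = {G_1,...,G_K} of {1,...,p} (A_{ak} = 1 iff a ∈ G_k), C is symmetric positive semidefinite, and Γ is diagonal with Γ_{aa} = γ_k for a ∈ G_k. Let m = min_k |G_k| and suppose Δ(C) := min_{j<k}(C_{jj}+C_{kk}−2C_{jk}) > (2/m)(max_k γ_k − min_k γ_k). Then B* is the unique maximizer of B ↦ ⟨Σ, B⟩ over the convex set 𝒞 = {B symmetric PSD, nonnegative entries, row sums 1, trace K}. -/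
open Finset

/-! ### Auxiliary definitions -/

/-- Block sums of a matrix with respect to the partition given by `g`. -/
noncomputable def sB {p K : ℕ} (g : Fin p → Fin K) (B : Matrix (Fin p) (Fin p) ℝ)
    (j k : Fin K) : ℝ :=
  ∑ a ∈ univ.filter (fun a => g a = j), ∑ b ∈ univ.filter (fun b => g b = k), B a b

/-- Partial traces of a matrix with respect to the partition given by `g`. -/
noncomputable def tB {p K : ℕ} (g : Fin p → Fin K) (B : Matrix (Fin p) (Fin p) ℝ)
    (k : Fin K) : ℝ :=
  ∑ a ∈ univ.filter (fun a => g a = k), B a a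

/-- Group sizes, as reals. -/
noncomputable def NN {p K : ℕ} (g : Fin p → Fin K) (k : Fin K) : ℝ :=
  ((univ.filter (fun a => g a = k)).card : ℝ)

open Matrix

/-! ### Basic facts about PSD matrices -/

lemma quad_form {p : ℕ} (B : Matrix (Fin p) (Fin p) ℝ) (x : Fin p → ℝ) :
    star x ⬝ᵥ B.mulVec x = ∑ a, ∑ b, x a * (B a b * x b) := by
  simp [dotProduct, Matrix.mulVec, Finset.mul_sum]

lemma psd_quad {p : ℕ} {B : Matrix (Fin p) (Fin p) ℝ} (hB : B.PosSemidef) (x : Fin p → ℝ) :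
    0 ≤ ∑ a, ∑ b, x a * (B a b * x b) := by
  rw [← quad_form]; exact hB.dotProduct_mulVec_nonneg x

lemma psd_symm {p : ℕ} {B : Matrix (Fin p) (Fin p) ℝ} (hB : B.PosSemidef) (a b : Fin p) :
    B b a = B a b := by
  have h := hB.1
  rw [Matrix.IsHermitian] at h
  conv_lhs => rw [← h]
  simp [Matrix.conjTranspose_apply]

lemma psd_two {p : ℕ} {B : Matrix (Fin p) (Fin p) ℝ} (hB : B.PosSemidef) (a b : Fin p) :
    2 * B a b ≤ B a a + B b b := by
  rcases eq_or_ne a b with rfl | hab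
  · linarith [le_refl (B a a)]
  · have h := psd_quad hB (fun c => (if c = a then (1:ℝ) else 0) - (if c = b then 1 else 0))
    have hba := psd_symm hB a b
    simp only [sub_mul, mul_sub, Finset.sum_sub_distrib, ite_mul, mul_ite, one_mul, mul_one,
      zero_mul, mul_zero, Finset.sum_ite_eq', Finset.mem_univ, if_true] at h
    linarith

lemma psd_sq {p : ℕ} {B : Matrix (Fin p) (Fin p) ℝ} (hB : B.PosSemidef) (a b : Fin p) :
    B a b ^ 2 ≤ B a a * B b b := by
  rcases eq_or_ne a b with rfl | hab
  · rw [sq]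
  · have key : ∀ t : ℝ, 0 ≤ B a a * (t * t) + (2 * B a b) * t + B b b := by
      intro t
      have h := psd_quad hB (fun c => t * (if c = a then (1:ℝ) else 0) + (if c = b then 1 else 0))
      have hba := psd_symm hB a b
      simp only [add_mul, mul_add, Finset.sum_add_distrib, ite_mul, mul_ite, one_mul, mul_one,
        zero_mul, mul_zero, Finset.sum_ite_eq', Finset.mem_univ, if_true] at h
      rw [hba] at h
      nlinarith [h]
    have := discrim_le_zero key
    rw [discrim] at this
    nlinarith [this]

/-! ### Facts about block sums -/

section facts
variable {p K : ℕ} (g : Fin p → Fin K) (B : Matrix (Fin p) (Fin p) ℝ)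

lemma s_nonneg (hnn : ∀ a b, 0 ≤ B a b) (j k : Fin K) : 0 ≤ sB g B j k :=
  Finset.sum_nonneg fun a _ => Finset.sum_nonneg fun b _ => hnn a b

lemma s_symm (hB : B.PosSemidef) (j k : Fin K) : sB g B j k = sB g B k j := by
  rw [sB, sB, Finset.sum_comm (f := fun a b => B a b)]
  exact Finset.sum_congr rfl fun a _ => Finset.sum_congr rfl fun b _ => psd_symm hB a b

lemma s_row (hrow : ∀ a, ∑ b, B a b = 1) (j : Fin K) : ∑ k, sB g B j k = NN g j := by
  rw [NN]
  calc ∑ k, sB g B j k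
      = ∑ a ∈ univ.filter (fun a => g a = j), ∑ k, ∑ b ∈ univ.filter (fun b => g b = k), B a b :=
        Finset.sum_comm
    _ = ∑ a ∈ univ.filter (fun a => g a = j), (1:ℝ) := by
        refine Finset.sum_congr rfl fun a _ => ?_
        rw [Finset.sum_fiberwise univ g (fun b => B a b)]
        exact hrow a
    _ = _ := by rw [Finset.sum_const, nsmul_eq_mul, mul_one]

lemma t_sum (htr : B.trace = (K : ℝ)) : ∑ k, tB g B k = (K : ℝ) := by
  rw [show (∑ k, tB g B k) = ∑ a, B a a from Finset.sum_fiberwise univ g (fun a => B a a)]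
  exact htr

lemma s_diag_le (hB : B.PosSemidef) (k : Fin K) : sB g B k k ≤ NN g k * tB g B k := by
  have hle : ∑ a ∈ univ.filter (fun a => g a = k), ∑ b ∈ univ.filter (fun b => g b = k),
      (2 * B a b) ≤ ∑ a ∈ univ.filter (fun a => g a = k), ∑ b ∈ univ.filter (fun b => g b = k),
      (B a a + B b b) :=
    Finset.sum_le_sum fun a _ => Finset.sum_le_sum fun b _ => psd_two hB a b
  have hL : ∑ a ∈ univ.filter (fun a => g a = k), ∑ b ∈ univ.filter (fun b => g b = k),
      (2 * B a b) = 2 * sB g B k k := by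
    rw [sB, Finset.mul_sum]
    exact Finset.sum_congr rfl fun a _ => (Finset.mul_sum _ _ _).symm
  have hR : ∑ a ∈ univ.filter (fun a => g a = k), ∑ b ∈ univ.filter (fun b => g b = k),
      (B a a + B b b) = 2 * (NN g k * tB g B k) := by
    simp only [Finset.sum_add_distrib, Finset.sum_const, nsmul_eq_mul]
    rw [← Finset.mul_sum, tB, NN]
    ring
  rw [hL, hR] at hle
  linarith

end facts

/-! ### The inner product formula -/

lemma inner_formula {p K : ℕ} (g : Fin p → Fin K) (C : Matrix (Fin K) (Fin K) ℝ)
    (γ : Fin K → ℝ) (S B : Matrix (Fin p) (Fin p) ℝ)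
    (hS : ∀ a b, S a b = C (g a) (g b) + (Matrix.diagonal (fun c => γ (g c))) a b) :
    ∑ a, ∑ b, S a b * B a b
      = (∑ j, ∑ k, C j k * sB g B j k) + ∑ k, γ k * tB g B k := by
  have split : ∑ a, ∑ b, S a b * B a b
      = (∑ a, ∑ b, C (g a) (g b) * B a b)
        + ∑ a, ∑ b, (Matrix.diagonal (fun c => γ (g c))) a b * B a b := by
    rw [← Finset.sum_add_distrib]
    refine Finset.sum_congr rfl fun a _ => ?_
    rw [← Finset.sum_add_distrib]
    refine Finset.sum_congr rfl fun b _ => ?_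
    rw [hS, add_mul]
  rw [split]
  congr 1
  · rw [← Finset.sum_fiberwise univ g (fun a => ∑ b, C (g a) (g b) * B a b)]
    refine Finset.sum_congr rfl fun j _ => ?_
    have h1 : ∀ a ∈ univ.filter (fun a => g a = j),
        (∑ b, C (g a) (g b) * B a b)
          = ∑ k, ∑ b ∈ univ.filter (fun b => g b = k), C j k * B a b := by
      intro a ha
      rw [← Finset.sum_fiberwise univ g (fun b => C (g a) (g b) * B a b)]
      refine Finset.sum_congr rfl fun k _ => Finset.sum_congr rfl fun b hb => ?_
      rw [(Finset.mem_filter.mp ha).2, (Finset.mem_filter.mp hb).2]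
    rw [Finset.sum_congr rfl h1, Finset.sum_comm]
    refine Finset.sum_congr rfl fun k _ => ?_
    rw [sB, Finset.mul_sum]
    exact Finset.sum_congr rfl fun a _ => (Finset.mul_sum _ _ _).symm
  · have h1 : ∀ a : Fin p, (∑ b, (Matrix.diagonal (fun c => γ (g c))) a b * B a b)
        = γ (g a) * B a a := by
      intro a
      rw [Finset.sum_eq_single a]
      · rw [Matrix.diagonal_apply_eq]
      · intro b _ hb
        rw [Matrix.diagonal_apply_ne _ (Ne.symm hb), zero_mul]
      · intro h; exact absurd (Finset.mem_univ a) h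
    rw [Finset.sum_congr rfl fun a _ => h1 a,
      ← Finset.sum_fiberwise univ g (fun a => γ (g a) * B a a)]
    refine Finset.sum_congr rfl fun k _ => ?_
    rw [tB, Finset.mul_sum]
    exact Finset.sum_congr rfl fun a ha => by rw [(Finset.mem_filter.mp ha).2]

/-! ### Values on `Bstar` -/

lemma sstar_val {p K : ℕ} (g : Fin p → Fin K) (j k : Fin K) :
    sB g (Bstar p K g) j k = if j = k then NN g j else 0 := by
  rw [sB]
  rcases eq_or_ne j k with rfl | h
  · rw [if_pos rfl, NN]
    have h1 : ∀ a ∈ univ.filter (fun a => g a = j), (∑ b ∈ univ.filter (fun b => g b = j),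
        Bstar p K g a b) = 1 := by
      intro a ha
      have hga := (Finset.mem_filter.mp ha).2
      have h2 : ∀ b ∈ univ.filter (fun b => g b = j), Bstar p K g a b
          = ((univ.filter (fun c => g c = j)).card : ℝ)⁻¹ := by
        intro b hb
        have hgb := (Finset.mem_filter.mp hb).2
        rw [Bstar, if_pos (hga.trans hgb.symm), hga]
      rw [Finset.sum_congr rfl h2, Finset.sum_const, nsmul_eq_mul]
      exact mul_inv_cancel₀ (Nat.cast_ne_zero.mpr
        (Finset.card_ne_zero_of_mem (show a ∈ univ.filter (fun c => g c = j) by simp [hga])))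
    rw [Finset.sum_congr rfl h1, Finset.sum_const, nsmul_eq_mul, mul_one]
  · rw [if_neg h]
    refine Finset.sum_eq_zero fun a ha => Finset.sum_eq_zero fun b hb => ?_
    rw [Bstar, if_neg]
    rw [(Finset.mem_filter.mp ha).2, (Finset.mem_filter.mp hb).2]
    exact h

lemma tstar_val {p K : ℕ} (g : Fin p → Fin K) (hg : Function.Surjective g) (k : Fin K) :
    tB g (Bstar p K g) k = 1 := by
  rw [tB]
  have h2 : ∀ a ∈ univ.filter (fun a => g a = k), Bstar p K g a a
      = ((univ.filter (fun c => g c = k)).card : ℝ)⁻¹ := by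
    intro a ha
    rw [Bstar, if_pos rfl, (Finset.mem_filter.mp ha).2]
  rw [Finset.sum_congr rfl h2, Finset.sum_const, nsmul_eq_mul]
  obtain ⟨a, rfl⟩ := hg k
  exact mul_inv_cancel₀ (Nat.cast_ne_zero.mpr
    (Finset.card_ne_zero_of_mem (show a ∈ univ.filter (fun c => g c = g a) by simp)))

/-! ### The C-part identity -/

lemma c_identity {p K : ℕ} (g : Fin p → Fin K) (B : Matrix (Fin p) (Fin p) ℝ)
    (C : Matrix (Fin K) (Fin K) ℝ)
    (hsym : ∀ j k, sB g B j k = sB g B k j) (hrow : ∀ j, ∑ k, sB g B j k = NN g j) :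
    ∑ k, ∑ j ∈ univ.erase k, (C k k + C j j - 2 * C k j) * sB g B k j
      = 2 * (∑ k, C k k * NN g k) - 2 * (∑ j, ∑ k, C j k * sB g B j k) := by
  have step0 : ∑ k, ∑ j ∈ univ.erase k, (C k k + C j j - 2 * C k j) * sB g B k j
      = ∑ k, ∑ j, (C k k + C j j - 2 * C k j) * sB g B k j := by
    refine Finset.sum_congr rfl fun k _ => ?_
    conv_rhs => rw [← Finset.add_sum_erase univ (fun j => (C k k + C j j - 2 * C k j) * sB g B k j)
      (Finset.mem_univ k)]
    have hz : (C k k + C k k - 2 * C k k) * sB g B k k = 0 := by ring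
    rw [hz, zero_add]
  have expand : ∑ k, ∑ j, (C k k + C j j - 2 * C k j) * sB g B k j
      = (∑ k, ∑ j, C k k * sB g B k j) + (∑ k, ∑ j, C j j * sB g B k j)
        - 2 * (∑ k, ∑ j, C k j * sB g B k j) := by
    have h1 : ∀ k j, (C k k + C j j - 2 * C k j) * sB g B k j
        = C k k * sB g B k j + C j j * sB g B k j - 2 * (C k j * sB g B k j) := by
      intro k j; ring
    simp only [h1, Finset.sum_add_distrib, Finset.sum_sub_distrib, ← Finset.mul_sum]
  have hA : (∑ k, ∑ j, C k k * sB g B k j) = ∑ k, C k k * NN g k := by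
    refine Finset.sum_congr rfl fun k _ => ?_
    rw [← Finset.mul_sum, hrow]
  have hB2 : (∑ k, ∑ j, C j j * sB g B k j) = ∑ k, C k k * NN g k := by
    rw [Finset.sum_comm]
    refine Finset.sum_congr rfl fun j _ => ?_
    rw [← Finset.mul_sum]
    congr 1
    rw [← hrow j]
    exact Finset.sum_congr rfl fun k _ => (hsym j k).symm
  have hL : (∑ k, ∑ j, C k j * sB g B k j) = ∑ j, ∑ k, C j k * sB g B j k := rfl
  rw [step0, expand, hA, hB2, hL]
  ring

/-! ### The Γ-part bounds -/

lemma gamma_term_bound (c N u e γk γmax γmin : ℝ) (hc : 0 < c) (hNk : c ≤ N)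
    (hu : N * u ≤ e) (he : 0 ≤ e) (hk1 : γmin ≤ γk) (hk2 : γk ≤ γmax) :
    -((γmax - γmin)/c) * e ≤ (γk - γmax) * u := by
  have hrw : -((γmax - γmin)/c) * e = (-((γmax - γmin) * e))/c := by ring
  rcases le_or_gt 0 u with h | h
  · have hcu : c * u ≤ e := le_trans (by nlinarith) hu
    rw [hrw, div_le_iff₀ hc]
    nlinarith [mul_nonneg (sub_nonneg.mpr hk1) (mul_nonneg h hc.le)]
  · have h1 : 0 ≤ (γmax - γmin)/c := div_nonneg (by linarith) hc.le
    have h2 : 0 ≤ (γk - γmax) * u := by nlinarith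
    nlinarith [mul_nonneg h1 he]

lemma gamma_identity {p K : ℕ} (g : Fin p → Fin K) (B : Matrix (Fin p) (Fin p) ℝ)
    (γ : Fin K → ℝ) (γmax : ℝ) (htsum : ∑ k, tB g B k = (K:ℝ)) :
    ∑ k, (γ k - γmax) * (1 - tB g B k) = (∑ k, γ k) - ∑ k, γ k * tB g B k := by
  have h1 : ∀ k, (γ k - γmax) * (1 - tB g B k)
      = (γ k - γ k * tB g B k) - (γmax - γmax * tB g B k) := by intro k; ring
  simp only [h1, Finset.sum_sub_distrib]
  have h2 : ∑ k, γmax * tB g B k = γmax * (K:ℝ) := by rw [← Finset.mul_sum, htsum]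
  have h3 : ∑ _k : Fin K, γmax = (K:ℝ) * γmax := by
    rw [Finset.sum_const, nsmul_eq_mul, Finset.card_univ, Fintype.card_fin]
  rw [h2, h3]
  ring

/-! ### Membership of `Bstar` in 𝒞 -/

lemma Bstar_memC (p K : ℕ) (g : Fin p → Fin K) (hg : Function.Surjective g) :
    memC p K (Bstar p K g) := by
  set N : Fin K → ℝ := fun k => ((Finset.univ.filter (fun c => g c = k)).card : ℝ) with hN
  have hNpos : ∀ k, 0 < N k := by
    intro k
    obtain ⟨a, rfl⟩ := hg k
    have ha : a ∈ univ.filter (fun c => g c = g a) := by simp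
    simp only [hN]
    exact_mod_cast Finset.card_pos.mpr ⟨a, ha⟩
  have hB : ∀ a b, Bstar p K g a b = if g a = g b then (N (g a))⁻¹ else 0 := fun a b => rfl
  have hsym : (Bstar p K g).IsHermitian := by
    rw [Matrix.IsHermitian]
    ext a b
    simp only [Matrix.conjTranspose_apply, star_trivial, hB]
    rcases eq_or_ne (g a) (g b) with h | h
    · rw [if_pos h, if_pos h.symm, h]
    · rw [if_neg h, if_neg (Ne.symm h)]
  have hrow : ∀ a, ∑ b, Bstar p K g a b = 1 := by
    intro a
    have h1 : ∑ b, Bstar p K g a b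
        = ∑ b ∈ univ.filter (fun b => g b = g a), (N (g a))⁻¹ := by
      rw [Finset.sum_filter]
      exact Finset.sum_congr rfl fun b _ => by rw [hB]; simp [eq_comm]
    rw [h1, Finset.sum_const, nsmul_eq_mul]
    exact mul_inv_cancel₀ (ne_of_gt (hNpos (g a)))
  refine ⟨Matrix.PosSemidef.of_dotProduct_mulVec_nonneg hsym ?_, ?_, hrow, ?_⟩
  · intro x
    rw [quad_form]
    set T : Fin K → ℝ := fun k => ∑ b ∈ univ.filter (fun b => g b = k), x b with hT
    have step1 : (∑ a, ∑ b, x a * (Bstar p K g a b * x b))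
        = ∑ a, (N (g a))⁻¹ * (x a * T (g a)) := by
      refine Finset.sum_congr rfl fun a _ => ?_
      have : ∀ b, x a * (Bstar p K g a b * x b)
          = if g b = g a then (N (g a))⁻¹ * (x a * x b) else 0 := by
        intro b; rw [hB]
        rcases eq_or_ne (g b) (g a) with h | h
        · rw [if_pos h, if_pos h.symm]; ring
        · rw [if_neg h, if_neg (Ne.symm h)]; ring
      rw [Finset.sum_congr rfl fun b _ => this b, ← Finset.sum_filter, hT]
      rw [Finset.mul_sum, ← Finset.mul_sum]
    have step2 : (∑ a, (N (g a))⁻¹ * (x a * T (g a)))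
        = ∑ k, (N k)⁻¹ * (T k * T k) := by
      rw [← Finset.sum_fiberwise univ g (fun a => (N (g a))⁻¹ * (x a * T (g a)))]
      refine Finset.sum_congr rfl fun k _ => ?_
      have : ∀ a ∈ univ.filter (fun a => g a = k),
          (N (g a))⁻¹ * (x a * T (g a)) = (N k)⁻¹ * (x a * T k) := by
        intro a ha
        rw [(Finset.mem_filter.mp ha).2]
      rw [Finset.sum_congr rfl this, ← Finset.mul_sum, ← Finset.sum_mul]
    rw [step1, step2]
    refine Finset.sum_nonneg fun k _ => ?_
    have h := hNpos k
    have h2 : (0:ℝ) ≤ T k * T k := mul_self_nonneg _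
    positivity
  · intro a b
    rw [hB]
    split
    · positivity
    · exact le_refl 0
  · show ∑ a, (Bstar p K g).diag a = (K : ℝ)
    have h1 : ∀ a, (Bstar p K g) a a = (N (g a))⁻¹ := by
      intro a; rw [hB, if_pos rfl]
    calc ∑ a, (Bstar p K g).diag a = ∑ a, (N (g a))⁻¹ := Finset.sum_congr rfl fun a _ => h1 a
      _ = ∑ k, ∑ a ∈ univ.filter (fun a => g a = k), (N (g a))⁻¹ :=
          (Finset.sum_fiberwise univ g _).symm
      _ = ∑ k : Fin K, (1:ℝ) := by
          refine Finset.sum_congr rfl fun k _ => ?_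
          have : ∀ a ∈ univ.filter (fun a => g a = k), (N (g a))⁻¹ = (N k)⁻¹ := by
            intro a ha; rw [(Finset.mem_filter.mp ha).2]
          rw [Finset.sum_congr rfl this, Finset.sum_const, nsmul_eq_mul]
          exact mul_inv_cancel₀ (ne_of_gt (hNpos k))
      _ = (K : ℝ) := by simp

/-! ### The equality case -/

lemma eq_case {p K : ℕ} (g : Fin p → Fin K) (hg : Function.Surjective g)
    (B : Matrix (Fin p) (Fin p) ℝ) (hPSD : B.PosSemidef) (hnn : ∀ a b, 0 ≤ B a b)
    (hrow : ∀ a, ∑ b, B a b = 1) (htr : B.trace = (K : ℝ))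
    (hsz : ∀ k, ∀ j ∈ univ.erase k, sB g B k j = 0) : B = Bstar p K g := by
  have hNpos : ∀ k, (0:ℝ) < NN g k := by
    intro k
    obtain ⟨a, rfl⟩ := hg k
    have ha : a ∈ univ.filter (fun c => g c = g a) := by simp
    rw [NN]
    exact_mod_cast Finset.card_pos.mpr ⟨a, ha⟩
  have hBoff : ∀ a b, g a ≠ g b → B a b = 0 := by
    intro a b hab
    have h0 := hsz (g a) (g b) (Finset.mem_erase.mpr ⟨Ne.symm hab, Finset.mem_univ _⟩)
    rw [sB] at h0
    have houter := (Finset.sum_eq_zero_iff_of_nonneg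
      (fun a' _ => Finset.sum_nonneg fun b' _ => hnn a' b')).mp h0 a (by simp)
    exact (Finset.sum_eq_zero_iff_of_nonneg (fun b' _ => hnn a b')).mp houter b (by simp)
  have hskk : ∀ k, sB g B k k = NN g k := by
    intro k
    have hse : sB g B k k + (∑ j ∈ univ.erase k, sB g B k j) = NN g k := by
      rw [Finset.add_sum_erase univ (fun j => sB g B k j) (Finset.mem_univ k), s_row g B hrow]
    rw [Finset.sum_eq_zero (hsz k), add_zero] at hse
    exact hse
  have ht1 : ∀ k, tB g B k = 1 := by
    have ht_ge : ∀ k, 1 ≤ tB g B k := by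
      intro k
      have h1 := s_diag_le g B hPSD k
      rw [hskk k] at h1
      have h2 := hNpos k
      nlinarith
    have hsum : (∑ _k : Fin K, (1:ℝ)) = ∑ k, tB g B k := by
      rw [t_sum g B htr]; simp
    intro k
    exact ((Finset.sum_eq_sum_iff_of_le (fun i _ => ht_ge i)).mp hsum k (Finset.mem_univ k)).symm
  have heqterm : ∀ k, ∀ a ∈ univ.filter (fun a => g a = k), ∀ b ∈ univ.filter (fun b => g b = k),
      B a a + B b b - 2 * B a b = 0 := by
    intro k
    have htot : ∑ a ∈ univ.filter (fun a => g a = k), ∑ b ∈ univ.filter (fun b => g b = k),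
        (B a a + B b b - 2 * B a b) = 0 := by
      have e1 : ∑ a ∈ univ.filter (fun a => g a = k), ∑ b ∈ univ.filter (fun b => g b = k),
          (B a a + B b b - 2 * B a b)
          = NN g k * tB g B k + NN g k * tB g B k - 2 * sB g B k k := by
        have hsplit : ∀ a ∈ univ.filter (fun a => g a = k),
            (∑ b ∈ univ.filter (fun b => g b = k), (B a a + B b b - 2 * B a b))
            = NN g k * B a a + tB g B k - 2 * ∑ b ∈ univ.filter (fun b => g b = k), B a b := by
          intro a _
          rw [Finset.sum_sub_distrib, Finset.sum_add_distrib, Finset.sum_const, nsmul_eq_mul,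
            ← Finset.mul_sum, tB, NN]
        rw [Finset.sum_congr rfl hsplit, Finset.sum_sub_distrib, Finset.sum_add_distrib,
          Finset.sum_const, nsmul_eq_mul, ← Finset.mul_sum, ← Finset.mul_sum, tB, NN, sB]
      rw [e1, ht1 k, hskk k]
      ring
    have hnn2 : ∀ a ∈ univ.filter (fun a => g a = k),
        0 ≤ ∑ b ∈ univ.filter (fun b => g b = k), (B a a + B b b - 2 * B a b) := by
      intro a _
      exact Finset.sum_nonneg fun b _ => by linarith [psd_two hPSD a b]
    intro a ha b hb
    have houter := (Finset.sum_eq_zero_iff_of_nonneg hnn2).mp htot a ha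
    exact (Finset.sum_eq_zero_iff_of_nonneg
      (fun b' _ => by linarith [psd_two hPSD a b'])).mp houter b hb
  have hdiag_eq : ∀ a b, g a = g b → B a a = B b b ∧ B a b = B a a := by
    intro a b hab
    have ha : a ∈ univ.filter (fun a' => g a' = g a) := by simp
    have hb : b ∈ univ.filter (fun b' => g b' = g a) := by simp [hab.symm]
    have h1 := heqterm (g a) a ha b hb
    have h2 := psd_sq hPSD a b
    have h5 : B a a + B b b = 2 * B a b := by linarith
    have h4 : (B a a + B b b)^2 = 4 * B a b^2 := by rw [h5]; ring
    have h3 : B a a = B b b := by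
      nlinarith [h4, h2, sq_nonneg (B a a - B b b), sq_nonneg (B a a + B b b)]
    exact ⟨h3, by linarith⟩
  have hdiagval : ∀ a, B a a = (NN g (g a))⁻¹ := by
    intro a
    have h1 : tB g B (g a) = NN g (g a) * B a a := by
      rw [tB, NN]
      have : ∀ a' ∈ univ.filter (fun a' => g a' = g a), B a' a' = B a a := by
        intro a' ha'
        exact ((hdiag_eq a a' ((Finset.mem_filter.mp ha').2).symm).1).symm
      rw [Finset.sum_congr rfl this, Finset.sum_const, nsmul_eq_mul]
    have h2 : NN g (g a) * B a a = 1 := by rw [← h1, ht1]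
    exact eq_inv_of_mul_eq_one_left (by rw [mul_comm] at h2; exact h2)
  funext a b
  by_cases h : g a = g b
  · rw [(hdiag_eq a b h).2, hdiagval a, Bstar, if_pos h]
    rfl
  · rw [hBoff a b h, Bstar, if_neg h]

/-- if Δ(C) > (2/m)|Γ|_V then B* is the unique maximizer of
B ↦ ⟨Σ, B⟩ over 𝒞, where Σ = A C Aᵀ + Γ. -/
theorem stmt_6 (p K : ℕ) (g : Fin p → Fin K) (hg : Function.Surjective g)
    (C : Matrix (Fin K) (Fin K) ℝ) (hC : C.PosSemidef)
    (γ : Fin K → ℝ)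
    (m : ℕ)
    (hm : IsLeast {n : ℕ | ∃ j, n = (Finset.univ.filter (fun a => g a = j)).card} m)
    (γmax γmin : ℝ)
    (hmax : IsGreatest (Set.range γ) γmax) (hmin : IsLeast (Set.range γ) γmin)
    (S : Matrix (Fin p) (Fin p) ℝ)
    (hS : ∀ a b, S a b = C (g a) (g b) + (Matrix.diagonal (fun c => γ (g c))) a b)
    (hΔ : ∀ j k : Fin K, j ≠ k →
      (2 / (m : ℝ)) * (γmax - γmin) < C j j + C k k - 2 * C j k) :
    memC p K (Bstar p K g) ∧
    ∀ B : Matrix (Fin p) (Fin p) ℝ, memC p K B → B ≠ Bstar p K g →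
      ∑ a, ∑ b, S a b * B a b < ∑ a, ∑ b, S a b * Bstar p K g a b := by
  refine ⟨Bstar_memC p K g hg, ?_⟩
  intro B hBC hne
  obtain ⟨hPSD, hnn, hrow, htr⟩ := hBC
  have hNpos : ∀ k, (0:ℝ) < NN g k := by
    intro k
    obtain ⟨a, rfl⟩ := hg k
    have ha : a ∈ univ.filter (fun c => g c = g a) := by simp
    rw [NN]
    exact_mod_cast Finset.card_pos.mpr ⟨a, ha⟩
  obtain ⟨hmem, hmlb⟩ := hm
  have hmpos : (0:ℝ) < (m:ℝ) := by
    obtain ⟨j0, hj0⟩ := hmem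
    have := hNpos j0
    rw [NN] at this
    rw [hj0]
    exact_mod_cast this
  have hmleN : ∀ k, (m:ℝ) ≤ NN g k := by
    intro k
    rw [NN]
    exact_mod_cast hmlb ⟨k, rfl⟩
  have hγ1 : ∀ k, γmin ≤ γ k := fun k => hmin.2 ⟨k, rfl⟩
  have hγ2 : ∀ k, γ k ≤ γmax := fun k => hmax.2 ⟨k, rfl⟩
  rw [inner_formula g C γ S B hS, inner_formula g C γ S (Bstar p K g) hS]
  have hRC : (∑ j, ∑ k, C j k * sB g (Bstar p K g) j k) = ∑ k, C k k * NN g k := by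
    refine Finset.sum_congr rfl fun j _ => ?_
    simp only [sstar_val, mul_ite, mul_zero]
    rw [Finset.sum_ite_eq univ j (fun k => C j k * NN g j)]
    simp
  have hRγ : (∑ k, γ k * tB g (Bstar p K g) k) = ∑ k, γ k := by
    refine Finset.sum_congr rfl fun k _ => ?_
    rw [tstar_val g hg k, mul_one]
  rw [hRC, hRγ]
  -- abbreviations
  have hssym : ∀ j k, sB g B j k = sB g B k j := fun j k => s_symm g B hPSD j k
  have hsrow : ∀ j, ∑ k, sB g B j k = NN g j := fun j => s_row g B hrow j
  have hCid := c_identity g B C hssym hsrow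
  -- gamma bound
  have hγbnd : ∀ k, -((γmax - γmin)/(m:ℝ)) * (∑ j ∈ univ.erase k, sB g B k j)
      ≤ (γ k - γmax) * (1 - tB g B k) := by
    intro k
    have he0 : 0 ≤ ∑ j ∈ univ.erase k, sB g B k j :=
      Finset.sum_nonneg fun j _ => s_nonneg g B hnn k j
    have hse : sB g B k k + (∑ j ∈ univ.erase k, sB g B k j) = NN g k := by
      rw [Finset.add_sum_erase univ (fun j => sB g B k j) (Finset.mem_univ k), hsrow]
    have hu : NN g k * (1 - tB g B k) ≤ ∑ j ∈ univ.erase k, sB g B k j := by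
      have h1 := s_diag_le g B hPSD k
      nlinarith [h1, hse]
    exact gamma_term_bound (m:ℝ) (NN g k) _ _ _ _ _ hmpos (hmleN k) hu he0 (hγ1 k) (hγ2 k)
  have hγtotal : -((γmax - γmin)/(m:ℝ)) * (∑ k, ∑ j ∈ univ.erase k, sB g B k j)
      ≤ (∑ k, γ k) - ∑ k, γ k * tB g B k := by
    rw [← gamma_identity g B γ γmax (t_sum g B htr), Finset.mul_sum]
    exact Finset.sum_le_sum fun k _ => hγbnd k
  by_cases hEx : ∀ k, ∀ j ∈ univ.erase k, sB g B k j = 0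
  · exact absurd (eq_case g hg B hPSD hnn hrow htr hEx) hne
  · push_neg at hEx
    obtain ⟨k1, j1, hj1, hne1⟩ := hEx
    have hpos1 : 0 < sB g B k1 j1 := lt_of_le_of_ne (s_nonneg g B hnn k1 j1) (Ne.symm hne1)
    have hterm_le : ∀ k : Fin K, ∀ j ∈ univ.erase k,
        (2/(m:ℝ))*(γmax - γmin) * sB g B k j ≤ (C k k + C j j - 2 * C k j) * sB g B k j := by
      intro k j hj
      have hjk : j ≠ k := (Finset.mem_erase.mp hj).1
      exact mul_le_mul_of_nonneg_right (le_of_lt (hΔ k j (Ne.symm hjk))) (s_nonneg g B hnn k j)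
    have hCstrict : (2/(m:ℝ))*(γmax - γmin) * (∑ k, ∑ j ∈ univ.erase k, sB g B k j)
        < ∑ k, ∑ j ∈ univ.erase k, (C k k + C j j - 2 * C k j) * sB g B k j := by
      have hrw : (2/(m:ℝ))*(γmax - γmin) * (∑ k, ∑ j ∈ univ.erase k, sB g B k j)
          = ∑ k, ∑ j ∈ univ.erase k, (2/(m:ℝ))*(γmax - γmin) * sB g B k j := by
        rw [Finset.mul_sum]
        exact Finset.sum_congr rfl fun k _ => Finset.mul_sum _ _ _
      rw [hrw]
      refine Finset.sum_lt_sum (fun k _ => Finset.sum_le_sum fun j hj => hterm_le k j hj)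
        ⟨k1, Finset.mem_univ k1, ?_⟩
      refine Finset.sum_lt_sum (fun j hj => hterm_le k1 j hj) ⟨j1, hj1, ?_⟩
      exact mul_lt_mul_of_pos_right
        (hΔ k1 j1 (Ne.symm (Finset.mem_erase.mp hj1).1)) hpos1
    have harith : (2/(m:ℝ))*(γmax - γmin) * (∑ k, ∑ j ∈ univ.erase k, sB g B k j)
        = 2*(((γmax - γmin)/(m:ℝ)) * (∑ k, ∑ j ∈ univ.erase k, sB g B k j)) := by ring
    linarith [hCstrict, hγtotal, hCid, harith]
end

section
/- Let B* be the normalized partnership matrix of a partition G of {1,...,p} and let B be a p×p matrix with nonnegative entries and row sums equal to 1. Then the entrywise ℓ1 norm |B*(I − B)|_1 = 2 Σ_{j≠k} |B_{G_jG_k}|_1. -/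
open Finset

/-- if B has nonnegative entries and B1 = 1, then
|B*(I − B)|₁ = 2 Σ_{j≠k} |B_{G_jG_k}|₁. -/
theorem stmt_9 (p K : ℕ) (g : Fin p → Fin K) (hg : Function.Surjective g)
    (B : Matrix (Fin p) (Fin p) ℝ)
    (hpos : ∀ a b, 0 ≤ B a b)
    (hsum : ∀ b, ∑ a, B a b = 1) :
    ∑ a, ∑ b, |(Bstar p K g * (1 - B)) a b|
      = 2 * ∑ a, ∑ b, if g a ≠ g b then |B a b| else 0 := by
  classical
  set n : Fin p → ℝ := fun a => ((Finset.univ.filter (fun c => g c = g a)).card : ℝ) with hn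
  have hnR : ∀ a, (0:ℝ) < n a := by
    intro a
    have h : 0 < (Finset.univ.filter (fun c => g c = g a)).card :=
      Finset.card_pos.2 ⟨a, by simp⟩
    have : (0:ℝ) < ((Finset.univ.filter (fun c => g c = g a)).card : ℝ) := by exact_mod_cast h
    exact this
  set S : Fin p → Fin p → ℝ :=
    fun a b => ∑ c ∈ Finset.univ.filter (fun c => g c = g a), B c b with hSdef
  set X : Fin p → Fin p → ℝ :=
    fun a b => ∑ c ∈ Finset.univ.filter (fun c => ¬ g c = g a), B c b with hXdef
  have hSX : ∀ a b, S a b + X a b = 1 := by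
    intro a b
    have := Finset.sum_filter_add_sum_filter_not Finset.univ
      (fun c => g c = g a) (fun c => B c b)
    simpa [hSdef, hXdef, hsum b] using this
  have hS0 : ∀ a b, 0 ≤ S a b := fun a b => Finset.sum_nonneg fun c _ => hpos c b
  have hX0 : ∀ a b, 0 ≤ X a b := fun a b => Finset.sum_nonneg fun c _ => hpos c b
  -- entry formula
  have hentry : ∀ a b, (Bstar p K g * (1 - B)) a b
      = ((if g a = g b then (1:ℝ) else 0) - S a b) / n a := by
    intro a b
    rw [Matrix.mul_apply]
    have h1 : ∀ c, Bstar p K g a c * (1 - B) c b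
        = (if g c = g a then ((if c = b then (1:ℝ) else 0) - B c b) * (n a)⁻¹ else 0) := by
      intro c
      have hB : Bstar p K g a c = if g a = g c then (n a)⁻¹ else 0 := rfl
      rw [hB, Matrix.sub_apply, Matrix.one_apply]
      by_cases h : g a = g c
      · rw [if_pos h, if_pos h.symm, mul_comm]
      · rw [if_neg h, if_neg (fun hh : g c = g a => h hh.symm), zero_mul]
    rw [Finset.sum_congr rfl (fun c _ => h1 c), ← Finset.sum_filter, ← Finset.sum_mul,
      Finset.sum_sub_distrib]
    have h2 : (∑ c ∈ Finset.univ.filter (fun c => g c = g a), if c = b then (1:ℝ) else 0)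
        = if g a = g b then (1:ℝ) else 0 := by
      rw [Finset.sum_ite_eq' (Finset.univ.filter (fun c => g c = g a)) b (fun _ => (1:ℝ))]
      simp [eq_comm]
    rw [h2, div_eq_mul_inv]
  -- absolute value formula
  have habs : ∀ a b, |(Bstar p K g * (1 - B)) a b|
      = (if g a = g b then X a b else S a b) / n a := by
    intro a b
    rw [hentry a b]
    by_cases h : g a = g b
    · have hx : (1:ℝ) - S a b = X a b := by linarith [hSX a b]
      rw [if_pos h, if_pos h, hx, abs_of_nonneg (div_nonneg (hX0 a b) (hnR a).le)]
    · rw [if_neg h, if_neg h, zero_sub, abs_div, abs_neg, abs_of_nonneg (hS0 a b),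
        abs_of_pos (hnR a)]
  -- key: group-mass of inverse sizes is 1
  have hone : ∀ b, (∑ a, if g a = g b then (n a)⁻¹ else 0) = 1 := by
    intro b
    have h1 : ∀ a, (if g a = g b then (n a)⁻¹ else 0) = (if g a = g b then (n b)⁻¹ else 0) := by
      intro a
      by_cases h : g a = g b
      · have : n a = n b := by rw [hn]; simp only [h]
        rw [this]
      · simp [h]
    rw [Finset.sum_congr rfl (fun a _ => h1 a), ← Finset.sum_filter, Finset.sum_const,
      nsmul_eq_mul]
    have hcard : ((Finset.univ.filter (fun a => g a = g b)).card : ℝ) = n b := rfl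
    rw [hcard, mul_inv_cancel₀ (hnR b).ne']
  -- pointwise splitting of each term as a sum over c
  have hsplit : ∀ a b, (if g a = g b then X a b else S a b) / n a
      = ∑ c, (if ¬ g c = g b then B c b else 0) *
          ((if g a = g b then (n a)⁻¹ else 0) + (if g a = g c then (n a)⁻¹ else 0)) := by
    intro a b
    by_cases h : g a = g b
    · have hterm : ∀ c, (if ¬ g c = g b then B c b else 0) *
          ((if g a = g b then (n a)⁻¹ else 0) + (if g a = g c then (n a)⁻¹ else 0))
          = (if ¬ g c = g a then B c b * (n a)⁻¹ else 0) := by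
        intro c
        by_cases hc : g c = g b
        · have hca : g c = g a := hc.trans h.symm
          rw [if_neg (not_not_intro hc), zero_mul, if_neg (not_not_intro hca)]
        · have hca : ¬ g c = g a := fun hca => hc (hca.trans h)
          have hac : ¬ g a = g c := fun hh => hca hh.symm
          rw [if_pos hc, if_pos h, if_neg hac, add_zero, if_pos hca]
      have hX' : X a b / n a = ∑ c, (if ¬ g c = g a then B c b * (n a)⁻¹ else 0) := by
        rw [← Finset.sum_filter, ← Finset.sum_mul, div_eq_mul_inv]
      rw [if_pos h, hX']
      exact Finset.sum_congr rfl (fun c _ => (hterm c).symm)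
    · have hterm : ∀ c, (if ¬ g c = g b then B c b else 0) *
          ((if g a = g b then (n a)⁻¹ else 0) + (if g a = g c then (n a)⁻¹ else 0))
          = (if g c = g a then B c b * (n a)⁻¹ else 0) := by
        intro c
        by_cases hc : g a = g c
        · have hcb : ¬ g c = g b := fun hcb => h (hc.trans hcb)
          rw [if_pos hcb, if_neg h, if_pos hc, zero_add, if_pos hc.symm]
        · have hca : ¬ g c = g a := fun hh => hc hh.symm
          rw [if_neg h, if_neg hc, add_zero, mul_zero, if_neg hca]
      have hS' : S a b / n a = ∑ c, (if g c = g a then B c b * (n a)⁻¹ else 0) := by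
        rw [← Finset.sum_filter, ← Finset.sum_mul, div_eq_mul_inv]
      rw [if_neg h, hS']
      exact Finset.sum_congr rfl (fun c _ => (hterm c).symm)
  -- assemble
  calc ∑ a, ∑ b, |(Bstar p K g * (1 - B)) a b|
      = ∑ a, ∑ b, ∑ c, (if ¬ g c = g b then B c b else 0) *
          ((if g a = g b then (n a)⁻¹ else 0) + (if g a = g c then (n a)⁻¹ else 0)) := by
        refine Finset.sum_congr rfl fun a _ => Finset.sum_congr rfl fun b _ => ?_
        rw [habs a b, hsplit a b]
    _ = ∑ b, ∑ c, ∑ a, (if ¬ g c = g b then B c b else 0) *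
          ((if g a = g b then (n a)⁻¹ else 0) + (if g a = g c then (n a)⁻¹ else 0)) := by
        rw [Finset.sum_comm]
        exact Finset.sum_congr rfl fun b _ => Finset.sum_comm
    _ = ∑ b, ∑ c, (if ¬ g c = g b then B c b else 0) * 2 := by
        refine Finset.sum_congr rfl fun b _ => Finset.sum_congr rfl fun c _ => ?_
        rw [← Finset.mul_sum, Finset.sum_add_distrib, hone b, hone c]
        norm_num
    _ = 2 * ∑ a, ∑ b, if g a ≠ g b then |B a b| else 0 := by
        rw [Finset.sum_comm, Finset.mul_sum]
        refine Finset.sum_congr rfl fun a _ => ?_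
        rw [Finset.mul_sum]
        refine Finset.sum_congr rfl fun b _ => ?_
        by_cases h : g a = g b
        · simp [h]
        · simp [h, abs_of_nonneg (hpos a b), mul_comm]
end

section
/- Let B be a symmetric positive semidefinite p×p matrix with nonnegative entries and all row sums equal to 1, and let G = {G_1,...,G_K} be a partition with minimal group size m. Then (1/m) Σ_{j≠k} |B_{G_jG_k}|_1 + tr(B) − K ≥ 0. -/
open Finset

/-- for B symmetric PSD with nonnegative entries and row sums 1, and a
partition with minimal group size m, (1/m)Σ_{j≠k}|B_{G_jG_k}|₁ + tr(B) − K ≥ 0. -/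
theorem stmt_13 (p K : ℕ) (g : Fin p → Fin K) (hg : Function.Surjective g)
    (m : ℕ)
    (hm : IsLeast {n : ℕ | ∃ j, n = (Finset.univ.filter (fun a => g a = j)).card} m)
    (B : Matrix (Fin p) (Fin p) ℝ)
    (hPSD : B.PosSemidef) (hpos : ∀ a b, 0 ≤ B a b) (hrow : ∀ a, ∑ b, B a b = 1) :
    0 ≤ (1 / (m : ℝ)) * (∑ a, ∑ b, if g a ≠ g b then |B a b| else 0)
        + B.trace - (K : ℝ) := by
  obtain ⟨⟨j0, hj0⟩, hlb⟩ := hm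
  -- m ≥ 1
  have hm1 : 1 ≤ m := by
    obtain ⟨a, ha⟩ := hg j0
    have : (Finset.univ.filter (fun x => g x = j0)).Nonempty := ⟨a, by simp [ha]⟩
    have := Finset.card_pos.mpr this
    omega
  have hmR : (1 : ℝ) ≤ (m : ℝ) := by exact_mod_cast hm1
  have hmpos : (0 : ℝ) < (m : ℝ) := by linarith
  -- key 2x2 PSD inequality
  have key : ∀ a b, 2 * B a b ≤ B a a + B b b := by
    intro a b
    by_cases hab : a = b
    · subst hab; linarith [hpos a a]
    · have hs : B a b = B b a := by have := hPSD.1.apply b a; simpa using this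
      have h2 := hPSD.dotProduct_mulVec_nonneg (Pi.single a (1:ℝ) - Pi.single b 1)
      simp [dotProduct, Matrix.mulVec, Pi.single_apply, mul_sub, sub_mul,
        Finset.sum_sub_distrib, Finset.mul_sum, hab, (Ne.symm hab)] at h2
      linarith
  set G : Fin K → Finset (Fin p) := fun k => Finset.univ.filter (fun a => g a = k) with hG
  set c : Fin K → ℕ := fun k => (G k).card with hc
  set trk : Fin K → ℝ := fun k => ∑ a ∈ G k, B a a with htrk
  set Off : Fin K → ℝ := fun k => ∑ a ∈ G k, ∑ b ∈ Finset.univ.filter (fun b => ¬ g b = k), B a b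
    with hOff
  have hOffnn : ∀ k, 0 ≤ Off k := fun k =>
    Finset.sum_nonneg fun a _ => Finset.sum_nonneg fun b _ => hpos a b
  -- block inequality: Σ_{a,b∈Gk} B a b ≤ c k * trk k
  have hblock : ∀ k, (∑ a ∈ G k, ∑ b ∈ G k, B a b) ≤ (c k : ℝ) * trk k := by
    intro k
    have h2 : 2 * (∑ a ∈ G k, ∑ b ∈ G k, B a b)
        ≤ (∑ a ∈ G k, ∑ b ∈ G k, (B a a + B b b)) := by
      rw [Finset.mul_sum]
      refine Finset.sum_le_sum fun a _ => ?_
      rw [Finset.mul_sum]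
      exact Finset.sum_le_sum fun b _ => key a b
    have h3 : (∑ a ∈ G k, ∑ b ∈ G k, (B a a + B b b)) = 2 * ((c k : ℝ) * trk k) := by
      simp only [Finset.sum_add_distrib, Finset.sum_const, nsmul_eq_mul, ← Finset.mul_sum]
      simp only [hc, htrk]
      ring
    linarith
  -- row sums: Σ_{a∈Gk,b∈Gk} B a b = c k - Off k
  have hrowk : ∀ k, (∑ a ∈ G k, ∑ b ∈ G k, B a b) = (c k : ℝ) - Off k := by
    intro k
    have : ∀ a ∈ G k, (∑ b ∈ G k, B a b)
        = 1 - ∑ b ∈ Finset.univ.filter (fun b => ¬ g b = k), B a b := by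
      intro a _
      have hsplit := Finset.sum_filter_add_sum_filter_not Finset.univ (fun b => g b = k)
        (fun b => B a b)
      rw [hrow a] at hsplit
      rw [hG]
      linarith
    rw [Finset.sum_congr rfl this, Finset.sum_sub_distrib]
    simp [hOff, hc]
  -- per-k inequality
  have hperk : ∀ k, 0 ≤ (1 / (m : ℝ)) * Off k + trk k - 1 := by
    intro k
    have hck : (m : ℝ) ≤ (c k : ℝ) := by exact_mod_cast hlb ⟨k, rfl⟩
    have hckpos : (0 : ℝ) < (c k : ℝ) := lt_of_lt_of_le hmpos hck
    have hb := hblock k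
    rw [hrowk k] at hb
    have h4 : (0 : ℝ) ≤ ((c k : ℝ) - m) * Off k := mul_nonneg (by linarith) (hOffnn k)
    have h5 : (m : ℝ) * ((c k : ℝ) - Off k) ≤ (m : ℝ) * ((c k : ℝ) * trk k) :=
      mul_le_mul_of_nonneg_left hb hmpos.le
    have hmain : (0 : ℝ) ≤ Off k + (m : ℝ) * trk k - m := by nlinarith [hckpos]
    have heq : (1 / (m : ℝ)) * Off k + trk k - 1 = (Off k + (m : ℝ) * trk k - m) / m := by
      field_simp
    rw [heq]
    exact div_nonneg hmain hmpos.le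
  -- sum over k
  have hcross : (∑ a, ∑ b, if g a ≠ g b then |B a b| else 0) = ∑ k, Off k := by
    rw [← Finset.sum_fiberwise (f := fun a => ∑ b, if g a ≠ g b then |B a b| else 0) (g := g)]
    refine Finset.sum_congr rfl fun k _ => Finset.sum_congr rfl fun a ha => ?_
    have hak : g a = k := by simpa [hG] using ha
    rw [← Finset.sum_filter_add_sum_filter_not Finset.univ (fun b => ¬ g b = k)
      (fun b => if g a ≠ g b then |B a b| else 0)]
    have e1 : (∑ b ∈ Finset.univ.filter (fun b => ¬ g b = k),
        (if g a ≠ g b then |B a b| else 0)) = ∑ b ∈ Finset.univ.filter (fun b => ¬ g b = k),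
        B a b := by
      refine Finset.sum_congr rfl fun b hb => ?_
      have : ¬ g b = k := by simpa using hb
      rw [if_pos (by rw [hak]; exact fun h => this h.symm)]
      exact abs_of_nonneg (hpos a b)
    have e2 : (∑ b ∈ Finset.univ.filter (fun b => ¬ ¬ g b = k),
        (if g a ≠ g b then |B a b| else 0)) = 0 := by
      refine Finset.sum_eq_zero fun b hb => ?_
      have : g b = k := by simpa using hb
      rw [if_neg (by simp [hak, this])]
    rw [e1, e2, add_zero]
  have htr : B.trace = ∑ k, trk k := by
    simp only [Matrix.trace, Matrix.diag]
    rw [← Finset.sum_fiberwise (f := fun a => B a a) (g := g)]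
  have hK : (K : ℝ) = ∑ k : Fin K, (1 : ℝ) := by simp
  rw [hcross, htr, hK, Finset.mul_sum, ← Finset.sum_add_distrib, ← Finset.sum_sub_distrib]
  exact Finset.sum_nonneg fun k _ => hperk k
end

section
/- Consider the covariance structure of Proposition (counterexample): let m ≥ 1, p = 3m, C = diag-blocks [[α,0,0],[0,β,β−τ],[0,β−τ,β]] with 0 < τ, Γ diagonal with value γ₊ on the first m coordinates and γ₋ on the remaining 2m coordinates, Σ = A C Aᵀ + Γ with A the assignment matrix of the partition into three consecutive groups of size m. Let B* be the partnership matrix of this partition, and let B₁ be the partnership matrix of the partition obtained by merging groups 2 and 3 and splitting group 1 into two halves of size m/2 (assume m even). Then ⟨Σ, B*⟩ = γ₊ + 2γ₋ + m·tr(C) and ⟨Σ, B₁⟩ = 2γ₊ + γ₋ + m·tr(C) − mτ; consequently ⟨Σ, B₁⟩ > ⟨Σ, B*⟩ whenever τ < (γ₊ − γ₋)/m. -/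
open Matrix

def GG (k i : ℕ) : Fin 3 := if i < k + k then 0 else if i < 2 * (k + k) then 1 else 2
def GH (k i : ℕ) : Fin 3 := if i < (k + k) / 2 then 0 else if i < k + k then 1 else 2
def DD (γp γm : ℝ) (k i : ℕ) : ℝ := if i < k + k then γp else γm
noncomputable def WS (k i j : ℕ) : ℝ := if GG k i = GG k j then ((k + k : ℕ) : ℝ)⁻¹ else 0
noncomputable def W1 (k i j : ℕ) : ℝ :=
  if GH k i = GH k j then
    (if i < k + k then 2 / ((k + k : ℕ) : ℝ) else 1 / (2 * ((k + k : ℕ) : ℝ))) else 0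

lemma GG0 {k i : ℕ} (h : i < k + k) : GG k i = 0 := by unfold GG; rw [if_pos h]
lemma GG1 {k i : ℕ} (h1 : k + k ≤ i) (h2 : i < 2 * (k + k)) : GG k i = 1 := by
  unfold GG; rw [if_neg (by omega), if_pos h2]
lemma GG2 {k i : ℕ} (h : 2 * (k + k) ≤ i) : GG k i = 2 := by
  unfold GG; rw [if_neg (by omega), if_neg (by omega)]
lemma GH0 {k i : ℕ} (h : i < k) : GH k i = 0 := by unfold GH; rw [if_pos (by omega)]
lemma GH1 {k i : ℕ} (h1 : k ≤ i) (h2 : i < k + k) : GH k i = 1 := by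
  unfold GH; rw [if_neg (by omega), if_pos h2]
lemma GH2 {k i : ℕ} (h : k + k ≤ i) : GH k i = 2 := by
  unfold GH; rw [if_neg (by omega), if_neg (by omega)]

lemma sum_range_four (k : ℕ) (w x y z : ℝ) (f : ℕ → ℝ)
    (h1 : ∀ i, i < k → f i = w)
    (h2 : ∀ i, k ≤ i → i < 2 * k → f i = x)
    (h3 : ∀ i, 2 * k ≤ i → i < 4 * k → f i = y)
    (h4 : ∀ i, 4 * k ≤ i → i < 6 * k → f i = z) :
    ∑ i ∈ Finset.range (6 * k), f i
      = (k : ℝ) * w + (k : ℝ) * x + 2 * (k : ℝ) * y + 2 * (k : ℝ) * z := by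
  rw [Finset.range_eq_Ico,
    ← Finset.sum_Ico_consecutive f (show 0 ≤ 4 * k by omega) (show 4 * k ≤ 6 * k by omega),
    ← Finset.sum_Ico_consecutive f (show 0 ≤ 2 * k by omega) (show 2 * k ≤ 4 * k by omega),
    ← Finset.sum_Ico_consecutive f (show 0 ≤ k by omega) (show k ≤ 2 * k by omega)]
  have e1 : ∑ i ∈ Finset.Ico 0 k, f i = (k : ℝ) * w := by
    rw [Finset.sum_congr rfl (fun i hi => h1 i (Finset.mem_Ico.mp hi).2)]
    simp [mul_comm]
  have e2 : ∑ i ∈ Finset.Ico k (2 * k), f i = (k : ℝ) * x := by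
    rw [Finset.sum_congr rfl (fun i hi => h2 i (Finset.mem_Ico.mp hi).1 (Finset.mem_Ico.mp hi).2)]
    rw [Finset.sum_const, Nat.card_Ico, nsmul_eq_mul, Nat.cast_sub (by omega)]; push_cast; ring
  have e3 : ∑ i ∈ Finset.Ico (2 * k) (4 * k), f i = 2 * (k : ℝ) * y := by
    rw [Finset.sum_congr rfl (fun i hi => h3 i (Finset.mem_Ico.mp hi).1 (Finset.mem_Ico.mp hi).2)]
    rw [Finset.sum_const, Nat.card_Ico, nsmul_eq_mul, Nat.cast_sub (by omega)]; push_cast; ring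
  have e4 : ∑ i ∈ Finset.Ico (4 * k) (6 * k), f i = 2 * (k : ℝ) * z := by
    rw [Finset.sum_congr rfl (fun i hi => h4 i (Finset.mem_Ico.mp hi).1 (Finset.mem_Ico.mp hi).2)]
    rw [Finset.sum_const, Nat.card_Ico, nsmul_eq_mul, Nat.cast_sub (by omega)]; push_cast; ring
  rw [e1, e2, e3, e4]

lemma conv_sum (k : ℕ) (Cm : Matrix (Fin 3) (Fin 3) ℝ) (γp γm : ℝ)
    (S B : Matrix (Fin (3 * (k + k))) (Fin (3 * (k + k))) ℝ) (W : ℕ → ℕ → ℝ)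
    (hS : ∀ a b, S a b = Cm (GG k ↑a) (GG k ↑b) + (if a = b then DD γp γm k ↑a else 0))
    (hB : ∀ a b, B a b = W ↑a ↑b) :
    ∑ a, ∑ b, S a b * B a b
      = ∑ i ∈ Finset.range (3 * (k + k)),
          ((∑ j ∈ Finset.range (3 * (k + k)), Cm (GG k i) (GG k j) * W i j)
            + DD γp γm k i * W i i) := by
  have step1 : ∑ a, ∑ b, S a b * B a b
      = ∑ a : Fin (3 * (k + k)),
          ((∑ b : Fin (3 * (k + k)), Cm (GG k ↑a) (GG k ↑b) * W ↑a ↑b)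
            + DD γp γm k ↑a * W ↑a ↑a) := by
    refine Finset.sum_congr rfl fun a _ => ?_
    have h : ∀ b, S a b * B a b
        = Cm (GG k ↑a) (GG k ↑b) * W ↑a ↑b
          + (if a = b then DD γp γm k ↑a * W ↑a ↑b else 0) := by
      intro b
      rw [hS, hB]
      by_cases h : a = b
      · simp [h]; ring
      · simp [h]
    rw [Finset.sum_congr rfl (fun b _ => h b), Finset.sum_add_distrib]
    congr 1
    simp
  rw [step1,
    ← Fin.sum_univ_eq_sum_range (fun i =>
      (∑ j ∈ Finset.range (3 * (k + k)), Cm (GG k i) (GG k j) * W i j)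
        + DD γp γm k i * W i i)]
  refine Finset.sum_congr rfl fun a _ => ?_
  rw [← Fin.sum_univ_eq_sum_range (fun j => Cm (GG k ↑a) (GG k j) * W ↑a j)]

lemma eval_star (k : ℕ) (hk : 0 < k) (α β τ γp γm : ℝ) :
    ∑ i ∈ Finset.range (3 * (k + k)),
        ((∑ j ∈ Finset.range (3 * (k + k)),
            (!![α, 0, 0; 0, β, β - τ; 0, β - τ, β] : Matrix (Fin 3) (Fin 3) ℝ)
              (GG k i) (GG k j) * WS k i j)
          + DD γp γm k i * WS k i i)
      = γp + 2 * γm + ((k + k : ℕ) : ℝ) * (α + β + β) := by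
  have hk0 : (k : ℝ) ≠ 0 := Nat.cast_ne_zero.mpr (by omega)
  rw [show 3 * (k + k) = 6 * k from by ring]
  have reg0 : ∀ i, i < k + k →
      (∑ j ∈ Finset.range (6 * k),
          (!![α, 0, 0; 0, β, β - τ; 0, β - τ, β] : Matrix (Fin 3) (Fin 3) ℝ)
            (GG k i) (GG k j) * WS k i j)
        + DD γp γm k i * WS k i i = α + γp * ((k + k : ℕ) : ℝ)⁻¹ := by
    intro i hi
    have hgi : GG k i = 0 := GG0 hi
    have e3 : (∑ j ∈ Finset.range (6 * k),
        (!![α, 0, 0; 0, β, β - τ; 0, β - τ, β] : Matrix (Fin 3) (Fin 3) ℝ)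
          (GG k i) (GG k j) * WS k i j)
        = (k : ℝ) * (α * ((k + k : ℕ) : ℝ)⁻¹) + (k : ℝ) * (α * ((k + k : ℕ) : ℝ)⁻¹)
          + 2 * (k : ℝ) * 0 + 2 * (k : ℝ) * 0 := by
      simp only [WS, hgi]
      refine sum_range_four k _ _ _ _ _ ?_ ?_ ?_ ?_
      · intro j hj; rw [GG0 (show j < k + k by omega)]; simp
      · intro j hj1 hj2; rw [GG0 (show j < k + k by omega)]; simp
      · intro j hj1 hj2; rw [GG1 (by omega) (by omega)]; simp
      · intro j hj1 hj2; rw [GG2 (by omega)]; simp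
    have eD : DD γp γm k i = γp := by simp only [DD]; rw [if_pos hi]
    have eW : WS k i i = ((k + k : ℕ) : ℝ)⁻¹ := by simp [WS]
    rw [e3, eD, eW]
    push_cast
    field_simp
    ring
  have reg1 : ∀ i, k + k ≤ i → i < 2 * (k + k) →
      (∑ j ∈ Finset.range (6 * k),
          (!![α, 0, 0; 0, β, β - τ; 0, β - τ, β] : Matrix (Fin 3) (Fin 3) ℝ)
            (GG k i) (GG k j) * WS k i j)
        + DD γp γm k i * WS k i i = β + γm * ((k + k : ℕ) : ℝ)⁻¹ := by
    intro i hi1 hi2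
    have hgi : GG k i = 1 := GG1 hi1 hi2
    have e3 : (∑ j ∈ Finset.range (6 * k),
        (!![α, 0, 0; 0, β, β - τ; 0, β - τ, β] : Matrix (Fin 3) (Fin 3) ℝ)
          (GG k i) (GG k j) * WS k i j)
        = (k : ℝ) * 0 + (k : ℝ) * 0
          + 2 * (k : ℝ) * (β * ((k + k : ℕ) : ℝ)⁻¹) + 2 * (k : ℝ) * 0 := by
      simp only [WS, hgi]
      refine sum_range_four k _ _ _ _ _ ?_ ?_ ?_ ?_
      · intro j hj; rw [GG0 (show j < k + k by omega)]; simp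
      · intro j hj1 hj2; rw [GG0 (show j < k + k by omega)]; simp
      · intro j hj1 hj2; rw [GG1 (by omega) (by omega)]; simp
      · intro j hj1 hj2; rw [GG2 (by omega)]; simp
    have eD : DD γp γm k i = γm := by simp only [DD]; rw [if_neg (by omega)]
    have eW : WS k i i = ((k + k : ℕ) : ℝ)⁻¹ := by simp [WS]
    rw [e3, eD, eW]
    push_cast
    field_simp
    ring
  have reg2 : ∀ i, 2 * (k + k) ≤ i →
      (∑ j ∈ Finset.range (6 * k),
          (!![α, 0, 0; 0, β, β - τ; 0, β - τ, β] : Matrix (Fin 3) (Fin 3) ℝ)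
            (GG k i) (GG k j) * WS k i j)
        + DD γp γm k i * WS k i i = β + γm * ((k + k : ℕ) : ℝ)⁻¹ := by
    intro i hi
    have hgi : GG k i = 2 := GG2 hi
    have e3 : (∑ j ∈ Finset.range (6 * k),
        (!![α, 0, 0; 0, β, β - τ; 0, β - τ, β] : Matrix (Fin 3) (Fin 3) ℝ)
          (GG k i) (GG k j) * WS k i j)
        = (k : ℝ) * 0 + (k : ℝ) * 0 + 2 * (k : ℝ) * 0
          + 2 * (k : ℝ) * (β * ((k + k : ℕ) : ℝ)⁻¹) := by
      simp only [WS, hgi]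
      refine sum_range_four k _ _ _ _ _ ?_ ?_ ?_ ?_
      · intro j hj; rw [GG0 (show j < k + k by omega)]; simp
      · intro j hj1 hj2; rw [GG0 (show j < k + k by omega)]; simp
      · intro j hj1 hj2; rw [GG1 (by omega) (by omega)]; simp
      · intro j hj1 hj2; rw [GG2 (by omega)]; simp
    have eD : DD γp γm k i = γm := by simp only [DD]; rw [if_neg (by omega)]
    have eW : WS k i i = ((k + k : ℕ) : ℝ)⁻¹ := by simp [WS]
    rw [e3, eD, eW]
    push_cast
    field_simp
    ring
  refine (sum_range_four k (α + γp * ((k + k : ℕ) : ℝ)⁻¹) (α + γp * ((k + k : ℕ) : ℝ)⁻¹)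
      (β + γm * ((k + k : ℕ) : ℝ)⁻¹) (β + γm * ((k + k : ℕ) : ℝ)⁻¹) _
      (fun i hi => reg0 i (by omega))
      (fun i h1 h2 => reg0 i (by omega))
      (fun i h1 h2 => reg1 i (by omega) (by omega))
      (fun i h1 h2 => reg2 i (by omega))).trans ?_
  push_cast
  field_simp
  ring

lemma eval_one (k : ℕ) (hk : 0 < k) (α β τ γp γm : ℝ) :
    ∑ i ∈ Finset.range (3 * (k + k)),
        ((∑ j ∈ Finset.range (3 * (k + k)),
            (!![α, 0, 0; 0, β, β - τ; 0, β - τ, β] : Matrix (Fin 3) (Fin 3) ℝ)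
              (GG k i) (GG k j) * W1 k i j)
          + DD γp γm k i * W1 k i i)
      = 2 * γp + γm + ((k + k : ℕ) : ℝ) * (α + β + β) - ((k + k : ℕ) : ℝ) * τ := by
  have hk0 : (k : ℝ) ≠ 0 := Nat.cast_ne_zero.mpr (by omega)
  rw [show 3 * (k + k) = 6 * k from by ring]
  have reg0 : ∀ i, i < k →
      (∑ j ∈ Finset.range (6 * k),
          (!![α, 0, 0; 0, β, β - τ; 0, β - τ, β] : Matrix (Fin 3) (Fin 3) ℝ)
            (GG k i) (GG k j) * W1 k i j)
        + DD γp γm k i * W1 k i i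
      = α + γp * (2 / ((k + k : ℕ) : ℝ)) := by
    intro i hi
    have hgi : GG k i = 0 := GG0 (by omega)
    have hhi : GH k i = 0 := GH0 hi
    have hii : i < k + k := by omega
    have e3 : (∑ j ∈ Finset.range (6 * k),
        (!![α, 0, 0; 0, β, β - τ; 0, β - τ, β] : Matrix (Fin 3) (Fin 3) ℝ)
          (GG k i) (GG k j) * W1 k i j)
        = (k : ℝ) * (α * (2 / ((k + k : ℕ) : ℝ))) + (k : ℝ) * 0
          + 2 * (k : ℝ) * 0 + 2 * (k : ℝ) * 0 := by
      simp only [W1, hgi, hhi, if_pos hii]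
      refine sum_range_four k _ _ _ _ _ ?_ ?_ ?_ ?_
      · intro j hj; rw [GH0 hj, GG0 (show j < k + k by omega)]; simp
      · intro j hj1 hj2; rw [GH1 (by omega) (by omega)]; simp
      · intro j hj1 hj2; rw [GH2 (by omega)]; simp
      · intro j hj1 hj2; rw [GH2 (by omega)]; simp
    have eD : DD γp γm k i = γp := by simp only [DD]; rw [if_pos hii]
    have eW : W1 k i i = 2 / ((k + k : ℕ) : ℝ) := by
      simp [W1, hii]
    rw [e3, eD, eW]
    push_cast
    field_simp
    ring
  have reg1 : ∀ i, k ≤ i → i < k + k →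
      (∑ j ∈ Finset.range (6 * k),
          (!![α, 0, 0; 0, β, β - τ; 0, β - τ, β] : Matrix (Fin 3) (Fin 3) ℝ)
            (GG k i) (GG k j) * W1 k i j)
        + DD γp γm k i * W1 k i i
      = α + γp * (2 / ((k + k : ℕ) : ℝ)) := by
    intro i hi1 hi2
    have hgi : GG k i = 0 := GG0 hi2
    have hhi : GH k i = 1 := GH1 hi1 hi2
    have e3 : (∑ j ∈ Finset.range (6 * k),
        (!![α, 0, 0; 0, β, β - τ; 0, β - τ, β] : Matrix (Fin 3) (Fin 3) ℝ)
          (GG k i) (GG k j) * W1 k i j)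
        = (k : ℝ) * 0 + (k : ℝ) * (α * (2 / ((k + k : ℕ) : ℝ)))
          + 2 * (k : ℝ) * 0 + 2 * (k : ℝ) * 0 := by
      simp only [W1, hgi, hhi, if_pos hi2]
      refine sum_range_four k _ _ _ _ _ ?_ ?_ ?_ ?_
      · intro j hj; rw [GH0 hj]; simp
      · intro j hj1 hj2; rw [GH1 (by omega) (by omega), GG0 (show j < k + k by omega)]; simp
      · intro j hj1 hj2; rw [GH2 (by omega)]; simp
      · intro j hj1 hj2; rw [GH2 (by omega)]; simp
    have eD : DD γp γm k i = γp := by simp only [DD]; rw [if_pos hi2]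
    have eW : W1 k i i = 2 / ((k + k : ℕ) : ℝ) := by
      simp [W1, hi2]
    rw [e3, eD, eW]
    push_cast
    field_simp
    ring
  have reg2 : ∀ i, k + k ≤ i → i < 2 * (k + k) →
      (∑ j ∈ Finset.range (6 * k),
          (!![α, 0, 0; 0, β, β - τ; 0, β - τ, β] : Matrix (Fin 3) (Fin 3) ℝ)
            (GG k i) (GG k j) * W1 k i j)
        + DD γp γm k i * W1 k i i
      = β - τ / 2 + γm * (1 / (2 * ((k + k : ℕ) : ℝ))) := by
    intro i hi1 hi2
    have hgi : GG k i = 1 := GG1 hi1 hi2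
    have hhi : GH k i = 2 := GH2 hi1
    have hii : ¬ i < k + k := by omega
    have e3 : (∑ j ∈ Finset.range (6 * k),
        (!![α, 0, 0; 0, β, β - τ; 0, β - τ, β] : Matrix (Fin 3) (Fin 3) ℝ)
          (GG k i) (GG k j) * W1 k i j)
        = (k : ℝ) * 0 + (k : ℝ) * 0
          + 2 * (k : ℝ) * (β * (1 / (2 * ((k + k : ℕ) : ℝ))))
          + 2 * (k : ℝ) * ((β - τ) * (1 / (2 * ((k + k : ℕ) : ℝ)))) := by
      simp only [W1, hgi, hhi, if_neg hii]
      refine sum_range_four k _ _ _ _ _ ?_ ?_ ?_ ?_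
      · intro j hj; rw [GH0 hj]; simp
      · intro j hj1 hj2; rw [GH1 (by omega) (by omega)]; simp
      · intro j hj1 hj2; rw [GH2 (by omega), GG1 (by omega) (by omega)]; simp
      · intro j hj1 hj2; rw [GH2 (by omega), GG2 (by omega)]; simp
    have eD : DD γp γm k i = γm := by simp only [DD]; rw [if_neg hii]
    have eW : W1 k i i = 1 / (2 * ((k + k : ℕ) : ℝ)) := by
      simp [W1, hii]
    rw [e3, eD, eW]
    push_cast
    field_simp
    ring
  have reg3 : ∀ i, 2 * (k + k) ≤ i →
      (∑ j ∈ Finset.range (6 * k),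
          (!![α, 0, 0; 0, β, β - τ; 0, β - τ, β] : Matrix (Fin 3) (Fin 3) ℝ)
            (GG k i) (GG k j) * W1 k i j)
        + DD γp γm k i * W1 k i i
      = β - τ / 2 + γm * (1 / (2 * ((k + k : ℕ) : ℝ))) := by
    intro i hi
    have hgi : GG k i = 2 := GG2 hi
    have hhi : GH k i = 2 := GH2 (by omega)
    have hii : ¬ i < k + k := by omega
    have e3 : (∑ j ∈ Finset.range (6 * k),
        (!![α, 0, 0; 0, β, β - τ; 0, β - τ, β] : Matrix (Fin 3) (Fin 3) ℝ)
          (GG k i) (GG k j) * W1 k i j)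
        = (k : ℝ) * 0 + (k : ℝ) * 0
          + 2 * (k : ℝ) * ((β - τ) * (1 / (2 * ((k + k : ℕ) : ℝ))))
          + 2 * (k : ℝ) * (β * (1 / (2 * ((k + k : ℕ) : ℝ)))) := by
      simp only [W1, hgi, hhi, if_neg hii]
      refine sum_range_four k _ _ _ _ _ ?_ ?_ ?_ ?_
      · intro j hj; rw [GH0 hj]; simp
      · intro j hj1 hj2; rw [GH1 (by omega) (by omega)]; simp
      · intro j hj1 hj2; rw [GH2 (by omega), GG1 (by omega) (by omega)]; simp
      · intro j hj1 hj2; rw [GH2 (by omega), GG2 (by omega)]; simp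
    have eD : DD γp γm k i = γm := by simp only [DD]; rw [if_neg hii]
    have eW : W1 k i i = 1 / (2 * ((k + k : ℕ) : ℝ)) := by
      simp [W1, hii]
    rw [e3, eD, eW]
    push_cast
    field_simp
    ring
  refine (sum_range_four k (α + γp * (2 / ((k + k : ℕ) : ℝ))) (α + γp * (2 / ((k + k : ℕ) : ℝ)))
      (β - τ / 2 + γm * (1 / (2 * ((k + k : ℕ) : ℝ))))
      (β - τ / 2 + γm * (1 / (2 * ((k + k : ℕ) : ℝ)))) _
      (fun i hi => reg0 i hi)
      (fun i h1 h2 => reg1 i h1 (by omega))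
      (fun i h1 h2 => reg2 i (by omega) (by omega))
      (fun i h1 h2 => reg3 i (by omega))).trans ?_
  push_cast
  field_simp
  ring

/-- the K-means counterexample. With three groups of size m, C as below and
Γ taking value γ₊ on group 1 and γ₋ on groups 2,3, the population K-means objective
satisfies ⟨Σ, B*⟩ = γ₊ + 2γ₋ + m·tr(C), ⟨Σ, B₁⟩ = 2γ₊ + γ₋ + m·tr(C) − mτ, so
⟨Σ, B₁⟩ > ⟨Σ, B*⟩ whenever τ < (γ₊ − γ₋)/m. -/
theorem stmt_14 (m : ℕ) (hm : 0 < m) (hme : Even m)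
    (α β τ γp γm : ℝ) (hτ : 0 < τ)
    (C : Matrix (Fin 3) (Fin 3) ℝ)
    (hC : C = !![α, 0, 0; 0, β, β - τ; 0, β - τ, β])
    (g : Fin (3 * m) → Fin 3)
    (hg : ∀ a, g a = if (a : ℕ) < m then 0 else if (a : ℕ) < 2 * m then 1 else 2)
    (S : Matrix (Fin (3 * m)) (Fin (3 * m)) ℝ)
    (hS : ∀ a b, S a b
      = C (g a) (g b) + (if a = b then (if (a : ℕ) < m then γp else γm) else 0))
    (Bstar B1 : Matrix (Fin (3 * m)) (Fin (3 * m)) ℝ)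
    (hBstar : ∀ a b, Bstar a b = if g a = g b then ((m : ℝ))⁻¹ else 0)
    (g1 : Fin (3 * m) → Fin 3)
    (hg1 : ∀ a, g1 a = if (a : ℕ) < m / 2 then 0 else if (a : ℕ) < m then 1 else 2)
    (hB1 : ∀ a b, B1 a b
      = if g1 a = g1 b then
          (if (a : ℕ) < m then 2 / (m : ℝ) else 1 / (2 * (m : ℝ))) else 0) :
    (∑ a, ∑ b, S a b * Bstar a b = γp + 2 * γm + (m : ℝ) * C.trace) ∧
    (∑ a, ∑ b, S a b * B1 a b = 2 * γp + γm + (m : ℝ) * C.trace - (m : ℝ) * τ) ∧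
    (τ < (γp - γm) / (m : ℝ) →
      ∑ a, ∑ b, S a b * Bstar a b < ∑ a, ∑ b, S a b * B1 a b) := by
  subst hC
  obtain ⟨k, rfl⟩ := hme
  have hk : 0 < k := by omega
  have hS' : ∀ a b, S a b
      = (!![α, 0, 0; 0, β, β - τ; 0, β - τ, β] : Matrix (Fin 3) (Fin 3) ℝ)
          (GG k ↑a) (GG k ↑b) + (if a = b then DD γp γm k ↑a else 0) := by
    intro a b; rw [hS a b, hg a, hg b]; rfl
  have hBs' : ∀ a b, Bstar a b = WS k ↑a ↑b := by
    intro a b; rw [hBstar a b, hg a, hg b]; rfl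
  have hB1' : ∀ a b, B1 a b = W1 k ↑a ↑b := by
    intro a b; rw [hB1 a b, hg1 a, hg1 b]; rfl
  have tr : Matrix.trace (!![α, 0, 0; 0, β, β - τ; 0, β - τ, β] : Matrix (Fin 3) (Fin 3) ℝ)
      = α + β + β := by simp [Matrix.trace_fin_three]
  have E1 : ∑ a, ∑ b, S a b * Bstar a b = γp + 2 * γm + ((k + k : ℕ) : ℝ) * (α + β + β) :=
    (conv_sum k _ γp γm S Bstar (WS k) hS' hBs').trans (eval_star k hk α β τ γp γm)
  have E2 : ∑ a, ∑ b, S a b * B1 a b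
      = 2 * γp + γm + ((k + k : ℕ) : ℝ) * (α + β + β) - ((k + k : ℕ) : ℝ) * τ :=
    (conv_sum k _ γp γm S B1 (W1 k) hS' hB1').trans (eval_one k hk α β τ γp γm)
  refine ⟨by rw [E1, tr], by rw [E2, tr], ?_⟩
  intro hτ2
  rw [E1, E2]
  have hkk : (0 : ℝ) < ((k + k : ℕ) : ℝ) := by
    exact_mod_cast Nat.pos_of_ne_zero (by omega)
  have h3 : ((k + k : ℕ) : ℝ) * τ < γp - γm := by
    rw [mul_comm]; exact (lt_div_iff₀ hkk).mp hτ2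
  linarith
end

section
/- Let Σ = A C Aᵀ + Γ with A the assignment matrix of a partition G, C symmetric, Γ diagonal. For the two metrics Δ(C) = min_{j<k}(C_{jj}+C_{kk}−2C_{jk}) and MCORD(Σ) = min over pairs a,b in different groups of max_{c ≠ a,b} |Σ_{ac} − Σ_{bc}|, if every group has size at least 2 then Δ(C) ≤ 2·MCORD(Σ) ≤ 2 √(Δ(C)) · max_k √(C_{kk}), provided C is positive semidefinite. -/
open Matrix

lemma psd_cauchy_schwarz {n : Type*} [Fintype n] [DecidableEq n] {C : Matrix n n ℝ}
    (hC : C.PosSemidef) (x y : n → ℝ) :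
    abs (x ⬝ᵥ C.mulVec y) ≤ Real.sqrt (x ⬝ᵥ C.mulVec x) * Real.sqrt (y ⬝ᵥ C.mulVec y) := by
  have hsym : ∀ u v : n → ℝ, u ⬝ᵥ C.mulVec v = v ⬝ᵥ C.mulVec u := by
    intro u v
    simp only [dotProduct, Matrix.mulVec, Finset.mul_sum]
    rw [Finset.sum_comm]
    refine Finset.sum_congr rfl fun i _ => Finset.sum_congr rfl fun j _ => ?_
    have := hC.1.apply i j
    simp only [star_trivial, Matrix.conjTranspose_apply] at this ⊢
    rw [← this]; ring
  have hnn : ∀ u : n → ℝ, 0 ≤ u ⬝ᵥ C.mulVec u := by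
    intro u; have := hC.dotProduct_mulVec_nonneg u; simpa using this
  have hq : ∀ t : ℝ, 0 ≤ (y ⬝ᵥ C.mulVec y) * (t * t) + (2 * (x ⬝ᵥ C.mulVec y)) * t + (x ⬝ᵥ C.mulVec x) := by
    intro t
    have := hnn (x + t • y)
    have e : (x + t • y) ⬝ᵥ C.mulVec (x + t • y)
        = (y ⬝ᵥ C.mulVec y) * (t * t) + (2 * (x ⬝ᵥ C.mulVec y)) * t + (x ⬝ᵥ C.mulVec x) := by
      simp only [Matrix.mulVec_add, Matrix.mulVec_smul, add_dotProduct,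
        dotProduct_add, dotProduct_smul, smul_dotProduct, smul_eq_mul]
      rw [hsym y x]; ring
    linarith [e ▸ this]
  have hd := discrim_le_zero hq
  rw [discrim] at hd
  have hsq : (x ⬝ᵥ C.mulVec y) ^ 2 ≤ (x ⬝ᵥ C.mulVec x) * (y ⬝ᵥ C.mulVec y) := by nlinarith
  calc abs (x ⬝ᵥ C.mulVec y) = Real.sqrt ((x ⬝ᵥ C.mulVec y) ^ 2) := (Real.sqrt_sq_eq_abs _).symm
    _ ≤ Real.sqrt ((x ⬝ᵥ C.mulVec x) * (y ⬝ᵥ C.mulVec y)) := Real.sqrt_le_sqrt hsq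
    _ = _ := Real.sqrt_mul (hnn x) _

lemma psd_entry_bound {n : Type*} [Fintype n] [DecidableEq n] {C : Matrix n n ℝ}
    (hC : C.PosSemidef) (j k m : n) :
    abs (C j m - C k m) ≤ Real.sqrt (C j j + C k k - 2 * C j k) * Real.sqrt (C m m) := by
  have hsymC : C k j = C j k := by
    have := hC.1.apply j k; simpa using this
  have h := psd_cauchy_schwarz hC (Pi.single j 1 - Pi.single k 1) (Pi.single m 1)
  have e1 : (Pi.single j 1 - Pi.single k 1) ⬝ᵥ C.mulVec (Pi.single m 1) = C j m - C k m := by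
    simp [Matrix.mulVec_single, sub_dotProduct, single_dotProduct]
  have e2 : (Pi.single j 1 - Pi.single k 1) ⬝ᵥ C.mulVec (Pi.single j 1 - Pi.single k 1)
      = C j j + C k k - 2 * C j k := by
    simp [Matrix.mulVec_sub, Matrix.mulVec_single, sub_dotProduct,
      dotProduct_sub, single_dotProduct, hsymC]
    ring
  have e3 : (Pi.single m 1 : n → ℝ) ⬝ᵥ C.mulVec (Pi.single m 1) = C m m := by
    simp [Matrix.mulVec_single, single_dotProduct]
  rw [e1, e2, e3] at h
  exact h


/-- for a G-block covariance Σ = A C Aᵀ + Γ with C PSD and all groups of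
size at least 2, the two separation metrics satisfy
Δ(C) ≤ 2·MCORD(Σ) ≤ 2·√(Δ(C))·max_k √(C_kk). -/
theorem stmt_17 (p K : ℕ) (g : Fin p → Fin K)
    (hsize : ∀ j : Fin K, 2 ≤ (Finset.univ.filter (fun a => g a = j)).card)
    (C : Matrix (Fin K) (Fin K) ℝ) (hC : C.PosSemidef)
    (S : Matrix (Fin p) (Fin p) ℝ)
    (hblock : ∀ a c : Fin p, a ≠ c → S a c = C (g a) (g c))
    (Δ M Cmax : ℝ)
    (hΔ : IsLeast {x : ℝ | ∃ j k : Fin K, j ≠ k ∧ x = C j j + C k k - 2 * C j k} Δ)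
    (hM : IsLeast {x : ℝ | ∃ a b : Fin p, g a ≠ g b ∧
            IsGreatest {y : ℝ | ∃ c : Fin p, c ≠ a ∧ c ≠ b ∧ y = |S a c - S b c|} x} M)
    (hCmax : IsGreatest {x : ℝ | ∃ k : Fin K, x = Real.sqrt (C k k)} Cmax) :
    Δ ≤ 2 * M ∧ 2 * M ≤ 2 * Real.sqrt Δ * Cmax := by
  have hsymC : ∀ j k : Fin K, C k j = C j k := by
    intro j k; have := hC.1.apply j k; simpa using this
  -- a generic "pick an element of group j different from a" helper
  have hpick : ∀ (j : Fin K) (a : Fin p), ∃ c : Fin p, g c = j ∧ c ≠ a := by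
    intro j a
    have h1 : 1 < (Finset.univ.filter (fun x => g x = j)).card :=
      lt_of_lt_of_le one_lt_two (hsize j)
    obtain ⟨c, hc, hca⟩ := Finset.exists_mem_ne h1 a
    exact ⟨c, (Finset.mem_filter.mp hc).2, hca⟩
  constructor
  · -- Δ ≤ 2 M
    obtain ⟨⟨a, b, hgab, hgr⟩, _⟩ := hM
    obtain ⟨c1, hc1g, hc1a⟩ := hpick (g a) a
    obtain ⟨c2, hc2g, hc2b⟩ := hpick (g b) b
    have hc1b : c1 ≠ b := fun h => hgab (by rw [← hc1g, h])
    have hc2a : c2 ≠ a := fun h => hgab (by rw [← hc2g, h])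
    have h1 : |S a c1 - S b c1| ≤ M := hgr.2 ⟨c1, hc1a, hc1b, rfl⟩
    have h2 : |S a c2 - S b c2| ≤ M := hgr.2 ⟨c2, hc2a, hc2b, rfl⟩
    rw [hblock a c1 (Ne.symm hc1a), hblock b c1 (Ne.symm hc1b), hc1g] at h1
    rw [hblock a c2 (Ne.symm hc2a), hblock b c2 (Ne.symm hc2b), hc2g] at h2
    have hΔle : Δ ≤ C (g a) (g a) + C (g b) (g b) - 2 * C (g a) (g b) :=
      hΔ.2 ⟨g a, g b, hgab, rfl⟩
    have hs := hsymC (g a) (g b)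
    have b1 := abs_le.mp h1
    have b2 := abs_le.mp h2
    linarith [b1.1, b1.2, b2.1, b2.2]
  · -- 2 M ≤ 2 √Δ Cmax
    obtain ⟨⟨j0, k0, hjk, hΔeq⟩, _⟩ := hΔ
    have hex : ∀ j : Fin K, ∃ a : Fin p, g a = j := by
      intro j
      have h2c := hsize j
      obtain ⟨a, ha⟩ := Finset.card_pos.mp (lt_of_lt_of_le two_pos h2c)
      exact ⟨a, (Finset.mem_filter.mp ha).2⟩
    obtain ⟨a0, hga0⟩ := hex j0
    obtain ⟨b0, hgb0⟩ := hex k0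
    have hgab0 : g a0 ≠ g b0 := by rw [hga0, hgb0]; exact hjk
    -- the candidate indices
    set T : Finset (Fin p) := Finset.univ.filter (fun c => c ≠ a0 ∧ c ≠ b0) with hT
    obtain ⟨c1, hc1g, hc1a⟩ := hpick j0 a0
    have hc1b : c1 ≠ b0 := fun h => hjk (by rw [← hc1g, h, hgb0])
    have hTne : T.Nonempty := ⟨c1, Finset.mem_filter.mpr ⟨Finset.mem_univ _, hc1a, hc1b⟩⟩
    set F : Finset ℝ := T.image (fun c => |S a0 c - S b0 c|) with hF
    have hFne : F.Nonempty := hTne.image _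
    set x := F.max' hFne with hx
    have hxmem : x ∈ F := F.max'_mem hFne
    obtain ⟨c0, hc0T, hc0x⟩ := Finset.mem_image.mp hxmem
    obtain ⟨hc0a, hc0b⟩ := (Finset.mem_filter.mp hc0T).2
    have hxgr : IsGreatest {y : ℝ | ∃ c : Fin p, c ≠ a0 ∧ c ≠ b0 ∧ y = |S a0 c - S b0 c|} x := by
      constructor
      · exact ⟨c0, hc0a, hc0b, hc0x.symm⟩
      · rintro y ⟨c, hca, hcb, rfl⟩
        exact F.le_max' _ (Finset.mem_image.mpr
          ⟨c, Finset.mem_filter.mpr ⟨Finset.mem_univ _, hca, hcb⟩, rfl⟩)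
    have hMx : M ≤ x := hM.2 ⟨a0, b0, hgab0, hxgr⟩
    -- bound x
    have hxbound : x ≤ Real.sqrt Δ * Cmax := by
      rw [← hc0x, hblock a0 c0 (Ne.symm hc0a), hblock b0 c0 (Ne.symm hc0b), hga0, hgb0]
    -- done below
      have hkey := psd_entry_bound hC j0 k0 (g c0)
      rw [← hΔeq] at hkey
      refine hkey.trans ?_
      have hCm : Real.sqrt (C (g c0) (g c0)) ≤ Cmax := hCmax.2 ⟨g c0, rfl⟩
      exact mul_le_mul_of_nonneg_left hCm (Real.sqrt_nonneg _)
    linarith [hMx.trans hxbound]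
end
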